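/- arXiv:1502.00259 — 3 statements merged into one kernel-verified Lean document; each statement's English description precedes it below -/
import Mathlib

section
/- Let H be a Hermitian d×d matrix with spectral projections P_E, and let φ, ψ ∈ ℂ^d be unit vectors with p_E = ‖P_E φ‖², q_E = ‖P_E ψ‖², and, for p_E ≠ 0, φ_E = P_E φ/‖P_E φ‖; for q_E ≠ 0, ψ_E = P_E ψ/‖P_E ψ‖. Assume Sp(φ) ∩ Sp(ψ) ≠ ∅, and set F_max = ∑_{E ∈ Sp(φ) ∩ Sp(ψ)} q_E and c = min_{E ∈ Sp(φ) ∩ Sp(ψ)} p_E/q_E. Then: (i) every quantum operation ℳ with Kraus operators commuting with H, with Tr[ℳ(|φ⟩⟨φ|)] > 0 and with normalized fidelity ⟨ψ|ℳ(|φ⟩⟨φ|)|ψ⟩ / Tr[ℳ(|φ⟩⟨φ|)] equal to F_max, satisfies Tr[ℳ(|φ⟩⟨φ|)] ≤ c · F_max; and (ii) the single Kraus operator M = ∑_{E ∈ Sp(φ) ∩ Sp(ψ)} √(c q_E/p_E) |ψ_E⟩⟨φ_E| satisfies M†M ≤ I, commutes with H, and achieves normalized fidelity F_max with success probability exactly c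 · F_max. -/
open Matrix
open scoped ComplexOrder Classical

/-- `wt P v = ‖P v‖²`, the weight of the vector `v` on the range of `P`. -/
noncomputable def wt {d : ℕ} (P : Matrix (Fin d) (Fin d) ℂ) (v : Fin d → ℂ) : ℝ :=
  (star (P *ᵥ v) ⬝ᵥ (P *ᵥ v)).re

/-- squared norm of a vector -/
noncomputable def nsq {d : ℕ} (v : Fin d → ℂ) : ℝ := ∑ j, Complex.normSq (v j)

lemma dot_self_eq_nsq {d : ℕ} (v : Fin d → ℂ) : star v ⬝ᵥ v = ((nsq v : ℝ) : ℂ) := by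
  simp only [dotProduct, nsq, Complex.ofReal_sum, Pi.star_apply, RCLike.star_def]
  exact Finset.sum_congr rfl fun j _ => (Complex.normSq_eq_conj_mul_self).symm ▸ rfl

lemma nsq_nonneg {d : ℕ} (v : Fin d → ℂ) : 0 ≤ nsq v :=
  Finset.sum_nonneg fun _ _ => Complex.normSq_nonneg _

lemma nsq_eq_zero_iff {d : ℕ} (v : Fin d → ℂ) : nsq v = 0 ↔ v = 0 := by
  rw [nsq, Finset.sum_eq_zero_iff_of_nonneg fun _ _ => Complex.normSq_nonneg _]
  constructor
  · intro h; funext j; exact Complex.normSq_eq_zero.mp (h j (Finset.mem_univ j))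
  · intro h j _; rw [h]; simp

lemma star_dot_eq {d : ℕ} (x y : Fin d → ℂ) :
    star x ⬝ᵥ y = ∑ j, (starRingEnd ℂ) (x j) * y j := by
  simp [dotProduct, RCLike.star_def]

lemma dot_sum {d : ℕ} {α : Type*} (s : Finset α) (v : Fin d → ℂ) (w : α → (Fin d → ℂ)) :
    v ⬝ᵥ (∑ i ∈ s, w i) = ∑ i ∈ s, v ⬝ᵥ w i := by
  simp only [dotProduct, Finset.sum_apply, Finset.mul_sum]
  exact Finset.sum_comm

lemma sum_dot {d : ℕ} {α : Type*} (s : Finset α) (v : α → (Fin d → ℂ)) (w : Fin d → ℂ) :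
    (∑ i ∈ s, v i) ⬝ᵥ w = ∑ i ∈ s, v i ⬝ᵥ w := by
  simp only [dotProduct, Finset.sum_apply, Finset.sum_mul]
  exact Finset.sum_comm

lemma sum_mulVec' {d : ℕ} {α : Type*} (s : Finset α) (A : α → Matrix (Fin d) (Fin d) ℂ)
    (v : Fin d → ℂ) : (∑ i ∈ s, A i) *ᵥ v = ∑ i ∈ s, A i *ᵥ v := by
  funext j
  simp only [mulVec, Finset.sum_apply, dotProduct, Matrix.sum_apply, Finset.sum_mul]
  exact Finset.sum_comm

lemma star_mulVec_dot {d : ℕ} (A : Matrix (Fin d) (Fin d) ℂ) (x w : Fin d → ℂ) :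
    star (A *ᵥ x) ⬝ᵥ w = star x ⬝ᵥ (Aᴴ *ᵥ w) := by
  rw [star_mulVec, ← dotProduct_mulVec]

lemma vecMulVec_mulVec' {d : ℕ} (u v x : Fin d → ℂ) :
    vecMulVec u v *ᵥ x = (v ⬝ᵥ x) • u := by
  funext i
  simp only [mulVec, dotProduct, vecMulVec_apply, Pi.smul_apply, smul_eq_mul, Finset.sum_mul]
  exact Finset.sum_congr rfl fun j _ => by ring

lemma mul_vecMulVec {d : ℕ} (A : Matrix (Fin d) (Fin d) ℂ) (u v : Fin d → ℂ) :
    A * vecMulVec u v = vecMulVec (A *ᵥ u) v := by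
  ext i j
  simp only [Matrix.mul_apply, vecMulVec_apply, mulVec, dotProduct, Finset.sum_mul]
  exact Finset.sum_congr rfl fun k _ => by ring

lemma vecMulVec_mul {d : ℕ} (u v : Fin d → ℂ) (A : Matrix (Fin d) (Fin d) ℂ) :
    vecMulVec u v * A = vecMulVec u (v ᵥ* A) := by
  ext i j
  simp only [Matrix.mul_apply, vecMulVec_apply, vecMul, dotProduct, Finset.mul_sum]
  exact Finset.sum_congr rfl fun k _ => by ring

lemma trace_vecMulVec' {d : ℕ} (u v : Fin d → ℂ) :
    Matrix.trace (vecMulVec u v) = v ⬝ᵥ u := by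
  simp only [Matrix.trace, Matrix.diag, vecMulVec_apply, dotProduct]
  exact Finset.sum_congr rfl fun k _ => by ring

lemma conjTranspose_vecMulVec {d : ℕ} (u v : Fin d → ℂ) :
    (vecMulVec u v)ᴴ = vecMulVec (star v) (star u) := by
  ext i j
  simp only [conjTranspose_apply, vecMulVec_apply, Pi.star_apply, star_mul']
  ring

lemma sandwich {d : ℕ} (A : Matrix (Fin d) (Fin d) ℂ) (x : Fin d → ℂ) :
    A * vecMulVec x (star x) * Aᴴ = vecMulVec (A *ᵥ x) (star (A *ᵥ x)) := by
  rw [mul_vecMulVec, vecMulVec_mul, ← star_mulVec]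

section CS
variable {α : Type*}

lemma cs_core (s : Finset α) (f g : α → ℂ) :
    ∑ i ∈ s, Complex.normSq (((∑ j ∈ s, Complex.normSq (f j) : ℝ) : ℂ) * g i
        - (∑ j ∈ s, (starRingEnd ℂ) (f j) * g j) * f i)
      = (∑ j ∈ s, Complex.normSq (f j)) *
        ((∑ j ∈ s, Complex.normSq (f j)) * (∑ j ∈ s, Complex.normSq (g j))
          - Complex.normSq (∑ j ∈ s, (starRingEnd ℂ) (f j) * g j)) := by
  set a : ℝ := ∑ j ∈ s, Complex.normSq (f j) with ha
  set G : ℝ := ∑ j ∈ s, Complex.normSq (g j) with hG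
  set B : ℂ := ∑ j ∈ s, (starRingEnd ℂ) (f j) * g j with hB
  have haC : ((a : ℝ) : ℂ) = ∑ j ∈ s, (starRingEnd ℂ) (f j) * f j := by
    rw [ha, Complex.ofReal_sum]
    exact Finset.sum_congr rfl fun j _ => Complex.normSq_eq_conj_mul_self
  have hGC : ((G : ℝ) : ℂ) = ∑ j ∈ s, (starRingEnd ℂ) (g j) * g j := by
    rw [hG, Complex.ofReal_sum]
    exact Finset.sum_congr rfl fun j _ => Complex.normSq_eq_conj_mul_self
  have hBbar : ∑ j ∈ s, (starRingEnd ℂ) (g j) * f j = (starRingEnd ℂ) B := by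
    rw [hB, map_sum]
    exact Finset.sum_congr rfl fun j _ => by
      simp only [_root_.map_mul, RingHomCompTriple.comp_apply, Complex.conj_conj, RingHom.id_apply]; ring
  apply Complex.ofReal_injective
  rw [Complex.ofReal_sum]
  have expand : ∀ i ∈ s,
      ((Complex.normSq ((a : ℂ) * g i - B * f i) : ℝ) : ℂ)
        = (a : ℂ)^2 * ((starRingEnd ℂ) (g i) * g i)
          - ((a : ℂ) * B) * ((starRingEnd ℂ) (g i) * f i)
          - ((a : ℂ) * (starRingEnd ℂ) B) * ((starRingEnd ℂ) (f i) * g i)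
          + (B * (starRingEnd ℂ) B) * ((starRingEnd ℂ) (f i) * f i) := by
    intro i _
    rw [Complex.normSq_eq_conj_mul_self]
    simp only [_root_.map_sub, _root_.map_mul, Complex.conj_ofReal]
    ring
  rw [Finset.sum_congr rfl expand]
  simp only [Finset.sum_add_distrib, Finset.sum_sub_distrib, ← Finset.mul_sum]
  rw [← haC, ← hGC, ← hB, hBbar]
  push_cast
  linear_combination (-(a : ℂ)) * Complex.mul_conj B

lemma cs_ineq (s : Finset α) (f g : α → ℂ) :
    Complex.normSq (∑ j ∈ s, (starRingEnd ℂ) (f j) * g j)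
      ≤ (∑ j ∈ s, Complex.normSq (f j)) * (∑ j ∈ s, Complex.normSq (g j)) := by
  have hanneg : (0:ℝ) ≤ ∑ j ∈ s, Complex.normSq (f j) :=
    Finset.sum_nonneg fun _ _ => Complex.normSq_nonneg _
  rcases eq_or_lt_of_le hanneg with h0 | hpos
  · have hf : ∀ j ∈ s, f j = 0 := by
      intro j hj
      have := (Finset.sum_eq_zero_iff_of_nonneg
        (fun _ _ => Complex.normSq_nonneg _)).mp h0.symm j hj
      exact Complex.normSq_eq_zero.mp this
    have hz : (∑ j ∈ s, (starRingEnd ℂ) (f j) * g j) = 0 :=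
      Finset.sum_eq_zero fun j hj => by rw [hf j hj]; simp
    rw [hz, ← h0, zero_mul]
    simp
  · have h := cs_core s f g
    have hLHS : (0:ℝ) ≤ ∑ i ∈ s, Complex.normSq (((∑ j ∈ s, Complex.normSq (f j) : ℝ) : ℂ) * g i
        - (∑ j ∈ s, (starRingEnd ℂ) (f j) * g j) * f i) :=
      Finset.sum_nonneg fun _ _ => Complex.normSq_nonneg _
    rw [h] at hLHS
    nlinarith [hLHS, hpos]

lemma cs_eq_case (s : Finset α) (f g : α → ℂ)
    (hA : (∑ j ∈ s, Complex.normSq (f j)) ≠ 0)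
    (heq : Complex.normSq (∑ j ∈ s, (starRingEnd ℂ) (f j) * g j)
      = (∑ j ∈ s, Complex.normSq (f j)) * (∑ j ∈ s, Complex.normSq (g j))) :
    ∀ i ∈ s, ((∑ j ∈ s, Complex.normSq (f j) : ℝ) : ℂ) * g i
      = (∑ j ∈ s, (starRingEnd ℂ) (f j) * g j) * f i := by
  have h := cs_core s f g
  rw [heq] at h
  simp only [sub_self, mul_zero] at h
  intro i hi
  have := (Finset.sum_eq_zero_iff_of_nonneg
    (fun _ _ => Complex.normSq_nonneg _)).mp h i hi
  have := Complex.normSq_eq_zero.mp this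
  linear_combination this

end CS

lemma dot_cs {d : ℕ} (x y : Fin d → ℂ) :
    Complex.normSq (star x ⬝ᵥ y) ≤ nsq x * nsq y := by
  rw [star_dot_eq]
  exact cs_ineq Finset.univ x y

lemma vecMulVec_smul_right {d : ℕ} (u v : Fin d → ℂ) (z : ℂ) :
    vecMulVec u (z • v) = z • vecMulVec u v := by
  ext i j
  simp only [vecMulVec_apply, Pi.smul_apply, smul_eq_mul, Matrix.smul_apply]
  ring

lemma smul_vecMulVec_left {d : ℕ} (u v : Fin d → ℂ) (z : ℂ) :
    vecMulVec (z • u) v = z • vecMulVec u v := by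
  ext i j
  simp only [vecMulVec_apply, Pi.smul_apply, smul_eq_mul, Matrix.smul_apply]
  ring

lemma wt_eq {d : ℕ} (Q : Matrix (Fin d) (Fin d) ℂ) (v : Fin d → ℂ) :
    wt Q v = nsq (Q *ᵥ v) := by
  rw [wt, dot_self_eq_nsq]
  simp

lemma wt_nonneg {d : ℕ} (Q : Matrix (Fin d) (Fin d) ℂ) (v : Fin d → ℂ) : 0 ≤ wt Q v := by
  rw [wt_eq]; exact nsq_nonneg _
/-- **Maximum-fidelity operations and their maximal success probability.** With `H` Hermitian
(spectral projections `P i`), unit vectors `φ, ψ`, `p_E = ‖P_E φ‖²`, `q_E = ‖P_E ψ‖²`,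
`F_max = ∑_{E ∈ Sp(φ)∩Sp(ψ)} q_E` and `c = min_{E ∈ Sp(φ)∩Sp(ψ)} p_E/q_E`: (i) every
energy-preserving quantum operation achieving normalized fidelity `F_max` has success
probability at most `c·F_max`; (ii) the single Kraus operator
`M = ∑_{E ∈ Sp(φ)∩Sp(ψ)} √(c q_E/p_E) |ψ_E⟩⟨φ_E|` is sub-normalized, commutes with `H`, and
achieves fidelity `F_max` with success probability exactly `c·F_max`. -/
theorem stmt_11 {d : ℕ} {ι : Type} [Fintype ι] [DecidableEq ι]
    (H : Matrix (Fin d) (Fin d) ℂ) (hH : H.IsHermitian)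
    (E : ι → ℝ) (hE : Function.Injective E)
    (P : ι → Matrix (Fin d) (Fin d) ℂ)
    (hHerm : ∀ i, (P i).IsHermitian)
    (hIdem : ∀ i, P i * P i = P i)
    (hOrth : ∀ i j, i ≠ j → P i * P j = 0)
    (hSum : ∑ i, P i = 1)
    (hSpec : H = ∑ i, (E i : ℂ) • P i)
    (φ ψ : Fin d → ℂ) (hφ : star φ ⬝ᵥ φ = 1) (hψ : star ψ ⬝ᵥ ψ = 1)
    (hne : (Finset.univ.filter (fun i => wt (P i) φ ≠ 0 ∧ wt (P i) ψ ≠ 0)).Nonempty) :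
    let T := Finset.univ.filter (fun i => wt (P i) φ ≠ 0 ∧ wt (P i) ψ ≠ 0)
    let Fmax : ℝ := ∑ i ∈ T, wt (P i) ψ
    let c : ℝ := T.inf' hne (fun i => wt (P i) φ / wt (P i) ψ)
    let φE : ι → (Fin d → ℂ) := fun i => ((Real.sqrt (wt (P i) φ))⁻¹ : ℂ) • (P i *ᵥ φ)
    let ψE : ι → (Fin d → ℂ) := fun i => ((Real.sqrt (wt (P i) ψ))⁻¹ : ℂ) • (P i *ᵥ ψ)
    let M : Matrix (Fin d) (Fin d) ℂ :=
      ∑ i ∈ T, ((Real.sqrt (c * wt (P i) ψ / wt (P i) φ) : ℝ) : ℂ) •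
        vecMulVec (ψE i) (star (φE i))
    (∀ (K : ℕ) (N : Fin K → Matrix (Fin d) (Fin d) ℂ),
      ((1 : Matrix (Fin d) (Fin d) ℂ) - ∑ k, (N k)ᴴ * N k).PosSemidef →
      (∀ k, N k * H = H * N k) →
      0 < Matrix.trace (∑ k, N k * vecMulVec φ (star φ) * (N k)ᴴ) →
      star ψ ⬝ᵥ ((∑ k, N k * vecMulVec φ (star φ) * (N k)ᴴ) *ᵥ ψ) /
          Matrix.trace (∑ k, N k * vecMulVec φ (star φ) * (N k)ᴴ) = ((Fmax : ℝ) : ℂ) →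
      Matrix.trace (∑ k, N k * vecMulVec φ (star φ) * (N k)ᴴ) ≤ ((c * Fmax : ℝ) : ℂ)) ∧
    ((1 : Matrix (Fin d) (Fin d) ℂ) - Mᴴ * M).PosSemidef ∧
    M * H = H * M ∧
    star ψ ⬝ᵥ ((M * vecMulVec φ (star φ) * Mᴴ) *ᵥ ψ) /
        Matrix.trace (M * vecMulVec φ (star φ) * Mᴴ) = ((Fmax : ℝ) : ℂ) ∧
    Matrix.trace (M * vecMulVec φ (star φ) * Mᴴ) = ((c * Fmax : ℝ) : ℂ) := by
  intro T Fmax c φE ψE M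
  -- basic positivity on T
  have hTmem : ∀ i, i ∈ T ↔ (wt (P i) φ ≠ 0 ∧ wt (P i) ψ ≠ 0) := by
    intro i
    constructor
    · intro hi; exact (Finset.mem_filter.mp hi).2
    · intro hi; exact Finset.mem_filter.mpr ⟨Finset.mem_univ i, hi⟩
  have hp : ∀ i ∈ T, 0 < wt (P i) φ := fun i hi =>
    lt_of_le_of_ne (wt_nonneg _ _) (Ne.symm ((hTmem i).mp hi).1)
  have hq : ∀ i ∈ T, 0 < wt (P i) ψ := fun i hi =>
    lt_of_le_of_ne (wt_nonneg _ _) (Ne.symm ((hTmem i).mp hi).2)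
  have hFpos : 0 < Fmax := by
    obtain ⟨i0, hi0⟩ := hne
    exact Finset.sum_pos' (fun i hi => (hq i hi).le) ⟨i0, hi0, hq i0 hi0⟩
  have hcle : ∀ i ∈ T, c ≤ wt (P i) φ / wt (P i) ψ := fun i hi => Finset.inf'_le _ hi
  obtain ⟨i0, hi0T, hc0⟩ := Finset.exists_mem_eq_inf' hne (fun i => wt (P i) φ / wt (P i) ψ)
  have hc0' : c = wt (P i0) φ / wt (P i0) ψ := hc0
  have hcpos : 0 < c := by
    rw [hc0']; exact div_pos (hp i0 hi0T) (hq i0 hi0T)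
  -- projection dot-product facts
  have hPdotL : ∀ i (x w : Fin d → ℂ), star (P i *ᵥ x) ⬝ᵥ w = star x ⬝ᵥ (P i *ᵥ w) := by
    intro i x w; rw [star_mulVec_dot, hHerm i]
  have hPP : ∀ i (x y : Fin d → ℂ),
      star (P i *ᵥ x) ⬝ᵥ (P i *ᵥ y) = star x ⬝ᵥ (P i *ᵥ y) := by
    intro i x y
    rw [hPdotL, mulVec_mulVec, hIdem i]
  have hPO : ∀ i j, i ≠ j → ∀ (x y : Fin d → ℂ),
      star (P i *ᵥ x) ⬝ᵥ (P j *ᵥ y) = 0 := by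
    intro i j hij x y
    rw [hPdotL, mulVec_mulVec, hOrth i j hij, Matrix.zero_mulVec, dotProduct_zero]
  have hres : ∀ x : Fin d → ℂ, ∑ i, P i *ᵥ x = x := by
    intro x; rw [← sum_mulVec', hSum, one_mulVec]
  have hPwt : ∀ i (v : Fin d → ℂ),
      star (P i *ᵥ v) ⬝ᵥ (P i *ᵥ v) = ((wt (P i) v : ℝ) : ℂ) := by
    intro i v; rw [dot_self_eq_nsq, wt_eq]
  have hwtzero : ∀ i (v : Fin d → ℂ), wt (P i) v = 0 → P i *ᵥ v = 0 := by
    intro i v hv; rw [wt_eq] at hv; exact (nsq_eq_zero_iff _).mp hv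
  have hnsq_decomp : ∀ x : Fin d → ℂ, nsq x = ∑ i, nsq (P i *ᵥ x) := by
    intro x
    have h1 : ((nsq x : ℝ) : ℂ) = ∑ i, ((nsq (P i *ᵥ x) : ℝ) : ℂ) :=
      calc ((nsq x : ℝ) : ℂ) = star x ⬝ᵥ x := (dot_self_eq_nsq x).symm
      _ = star x ⬝ᵥ (∑ i, P i *ᵥ x) := by rw [hres]
      _ = ∑ i, star x ⬝ᵥ (P i *ᵥ x) := dot_sum _ _ _
      _ = ∑ i, ((nsq (P i *ᵥ x) : ℝ) : ℂ) :=
        Finset.sum_congr rfl fun i _ => by rw [← hPP, dot_self_eq_nsq]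
    rw [← Complex.ofReal_sum] at h1
    exact_mod_cast h1
  have hHP : ∀ i, H * P i = (E i : ℂ) • P i := by
    intro i
    rw [hSpec, Finset.sum_mul]
    rw [Finset.sum_eq_single_of_mem i (Finset.mem_univ i)]
    · rw [Matrix.smul_mul, hIdem i]
    · intro j _ hji
      rw [Matrix.smul_mul, hOrth j i hji, smul_zero]
  have hPH : ∀ i, P i * H = (E i : ℂ) • P i := by
    intro i
    rw [hSpec, Finset.mul_sum]
    rw [Finset.sum_eq_single_of_mem i (Finset.mem_univ i)]
    · rw [Matrix.mul_smul, hIdem i]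
    · intro j _ hji
      rw [Matrix.mul_smul, hOrth i j (Ne.symm hji), smul_zero]
  have hcommP : ∀ (Q : Matrix (Fin d) (Fin d) ℂ), Q * H = H * Q → ∀ i, Q * P i = P i * Q := by
    intro Q hQ i
    have key : ∀ a b, a ≠ b → P a * Q * P b = 0 := by
      intro a b hab
      have h2 : P a * (Q * H) * P b = (E b : ℂ) • (P a * Q * P b) := by
        calc P a * (Q * H) * P b = (P a * Q) * (H * P b) := by simp only [mul_assoc]
        _ = (P a * Q) * ((E b : ℂ) • P b) := by rw [hHP b]
        _ = (E b : ℂ) • (P a * Q * P b) := by rw [Matrix.mul_smul]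
      have h3 : P a * (H * Q) * P b = (E a : ℂ) • (P a * Q * P b) := by
        calc P a * (H * Q) * P b = ((P a * H) * Q) * P b := by simp only [mul_assoc]
        _ = (((E a : ℂ) • P a) * Q) * P b := by rw [hPH a]
        _ = (E a : ℂ) • (P a * Q * P b) := by rw [Matrix.smul_mul, Matrix.smul_mul]
      have h4 : ((E a : ℂ) - (E b : ℂ)) • (P a * Q * P b) = 0 := by
        rw [sub_smul, ← h2, ← h3, hQ, sub_self]
      rcases smul_eq_zero.mp h4 with h | h
      · exfalso
        apply hab
        apply hE
        have := sub_eq_zero.mp h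
        exact_mod_cast this
      · exact h
    have e1 : Q * P i = P i * Q * P i := by
      have step : Q * P i = ∑ a, P a * Q * P i := by
        calc Q * P i = (1 : Matrix (Fin d) (Fin d) ℂ) * (Q * P i) := (one_mul _).symm
        _ = (∑ a, P a) * (Q * P i) := by rw [hSum]
        _ = ∑ a, P a * (Q * P i) := Finset.sum_mul _ _ _
        _ = ∑ a, P a * Q * P i := Finset.sum_congr rfl fun a _ => (mul_assoc _ _ _).symm
      rw [step, Finset.sum_eq_single_of_mem i (Finset.mem_univ i)
        (fun b _ hbi => key b i hbi)]
    have e2 : P i * Q = P i * Q * P i := by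
      have step : P i * Q = ∑ b, P i * Q * P b := by
        calc P i * Q = (P i * Q) * (1 : Matrix (Fin d) (Fin d) ℂ) := (mul_one _).symm
        _ = (P i * Q) * (∑ b, P b) := by rw [hSum]
        _ = ∑ b, P i * Q * P b := Finset.mul_sum _ _ _
      exact step.trans (Finset.sum_eq_single_of_mem i (Finset.mem_univ i)
        (fun b _ hbi => key i b (Ne.symm hbi)))
    exact e1.trans e2.symm
  -- definitional unfoldings of the let-bound variables
  have hφEdef : ∀ i, φE i = ((Real.sqrt (wt (P i) φ) : ℂ))⁻¹ • (P i *ᵥ φ) := fun _ => rfl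
  have hψEdef : ∀ i, ψE i = ((Real.sqrt (wt (P i) ψ) : ℂ))⁻¹ • (P i *ᵥ ψ) := fun _ => rfl
  have hMdef : M = ∑ i ∈ T, ((Real.sqrt (c * wt (P i) ψ / wt (P i) φ) : ℝ) : ℂ) •
      vecMulVec (ψE i) (star (φE i)) := rfl
  have hFdef : Fmax = ∑ i ∈ T, wt (P i) ψ := rfl
  -- scalar smul dot lemmas
  have hsd : ∀ (z : ℂ) (v w : Fin d → ℂ),
      star (z • v) ⬝ᵥ w = (starRingEnd ℂ) z * (star v ⬝ᵥ w) := by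
    intro z v w
    rw [star_smul, smul_dotProduct, smul_eq_mul, RCLike.star_def]
  have hds : ∀ (z : ℂ) (v w : Fin d → ℂ), star v ⬝ᵥ (z • w) = z * (star v ⬝ᵥ w) := by
    intro z v w
    rw [dotProduct_smul, smul_eq_mul]
  have hPφφ : ∀ i, star (P i *ᵥ φ) ⬝ᵥ φ = ((wt (P i) φ : ℝ) : ℂ) := by
    intro i; rw [hPdotL, ← hPP i φ φ, hPwt]
  have hPψψ : ∀ i, star (P i *ᵥ ψ) ⬝ᵥ ψ = ((wt (P i) ψ : ℝ) : ℂ) := by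
    intro i; rw [hPdotL, ← hPP i ψ ψ, hPwt]
  have hψPψ : ∀ i, star ψ ⬝ᵥ (P i *ᵥ ψ) = ((wt (P i) ψ : ℝ) : ℂ) := by
    intro i; rw [← hPP i ψ ψ, hPwt]
  have hsqp_ne : ∀ i ∈ T, Real.sqrt (wt (P i) φ) ≠ 0 :=
    fun i hi => ne_of_gt (Real.sqrt_pos.mpr (hp i hi))
  have hsqq_ne : ∀ i ∈ T, Real.sqrt (wt (P i) ψ) ≠ 0 :=
    fun i hi => ne_of_gt (Real.sqrt_pos.mpr (hq i hi))
  -- M applied to a vector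
  have hMx : ∀ x : Fin d → ℂ, M *ᵥ x = ∑ i ∈ T,
      (((Real.sqrt (c * wt (P i) ψ / wt (P i) φ) : ℝ) : ℂ) * (star (φE i) ⬝ᵥ x)) • ψE i := by
    intro x
    rw [hMdef, sum_mulVec']
    refine Finset.sum_congr rfl fun i hi => ?_
    rw [smul_mulVec, vecMulVec_mulVec', smul_smul]
  -- orthonormality of the ψE family on T
  have hψEoo : ∀ i ∈ T, ∀ j ∈ T, star (ψE i) ⬝ᵥ (ψE j) = if i = j then 1 else 0 := by
    intro i hi j hj
    rw [hψEdef, hψEdef, hsd, hds]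
    by_cases hij : i = j
    · subst hij
      rw [if_pos rfl, hPwt, map_inv₀, Complex.conj_ofReal]
      rw [← Complex.ofReal_inv, ← Complex.ofReal_mul, ← Complex.ofReal_mul,
        Complex.ofReal_eq_one]
      have hs := hsqq_ne i hi
      rw [← Real.mul_self_sqrt (hq i hi).le]
      field_simp
      rw [Real.sqrt_sq (Real.sqrt_nonneg _)]
    · rw [if_neg hij, hPO i j hij]
      ring
  -- norm of M *ᵥ x
  have hMxnorm : ∀ x : Fin d → ℂ, nsq (M *ᵥ x) = ∑ i ∈ T, Complex.normSq
      (((Real.sqrt (c * wt (P i) ψ / wt (P i) φ) : ℝ) : ℂ) * (star (φE i) ⬝ᵥ x)) := by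
    intro x
    set z : ι → ℂ := fun i =>
      ((Real.sqrt (c * wt (P i) ψ / wt (P i) φ) : ℝ) : ℂ) * (star (φE i) ⬝ᵥ x) with hz
    have key : ((nsq (M *ᵥ x) : ℝ) : ℂ) = ∑ i ∈ T, ((Complex.normSq (z i) : ℝ) : ℂ) := by
      rw [← dot_self_eq_nsq, hMx x]
      have hstar : star (∑ i ∈ T, z i • ψE i) = ∑ i ∈ T, star (z i • ψE i) := star_sum _ _
      rw [hstar, sum_dot]
      refine Finset.sum_congr rfl fun i hi => ?_
      rw [star_smul]
      rw [smul_dotProduct, dot_sum]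
      have inner : ∑ j ∈ T, star (ψE i) ⬝ᵥ (z j • ψE j) = z i := by
        rw [Finset.sum_eq_single_of_mem i hi]
        · rw [hds, hψEoo i hi i hi, if_pos rfl, mul_one]
        · intro j hj hji
          rw [hds, hψEoo i hi j hj, if_neg (fun h => hji h.symm), mul_zero]
      rw [inner, smul_eq_mul, RCLike.star_def, ← Complex.normSq_eq_conj_mul_self]
    have := key
    rw [← Complex.ofReal_sum] at this
    exact_mod_cast this
  -- subnormalization of M
  have hMxle : ∀ x : Fin d → ℂ, nsq (M *ᵥ x) ≤ nsq x := by
    intro x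
    rw [hMxnorm x]
    have step : ∀ i ∈ T, Complex.normSq
        (((Real.sqrt (c * wt (P i) ψ / wt (P i) φ) : ℝ) : ℂ) * (star (φE i) ⬝ᵥ x))
        ≤ nsq (P i *ᵥ x) := by
      intro i hi
      have hpi := hp i hi
      have hqi := hq i hi
      have hratio : 0 ≤ c * wt (P i) ψ / wt (P i) φ :=
        div_nonneg (mul_nonneg hcpos.le hqi.le) hpi.le
      have h1 : Complex.normSq (((Real.sqrt (c * wt (P i) ψ / wt (P i) φ) : ℝ) : ℂ)
          * (star (φE i) ⬝ᵥ x))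
          = (c * wt (P i) ψ / wt (P i) φ) * Complex.normSq (star (φE i) ⬝ᵥ x) := by
        rw [Complex.normSq_mul, Complex.normSq_ofReal, Real.mul_self_sqrt hratio]
      have h2 : star (φE i) ⬝ᵥ x
          = ((Real.sqrt (wt (P i) φ) : ℂ))⁻¹ * (star (P i *ᵥ φ) ⬝ᵥ (P i *ᵥ x)) := by
        rw [hφEdef, hsd, map_inv₀, Complex.conj_ofReal]
        congr 1
        exact (hPdotL i φ x).trans (hPP i φ x).symm
      have h3 : Complex.normSq (star (φE i) ⬝ᵥ x)
          = (wt (P i) φ)⁻¹ * Complex.normSq (star (P i *ᵥ φ) ⬝ᵥ (P i *ᵥ x)) := by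
        rw [h2, Complex.normSq_mul, Complex.normSq_inv, Complex.normSq_ofReal,
          Real.mul_self_sqrt hpi.le]
      have h4 : Complex.normSq (star (P i *ᵥ φ) ⬝ᵥ (P i *ᵥ x))
          ≤ wt (P i) φ * nsq (P i *ᵥ x) := by
        have := dot_cs (P i *ᵥ φ) (P i *ᵥ x)
        rwa [← wt_eq] at this
      have h5 : c * wt (P i) ψ / wt (P i) φ ≤ 1 := by
        have := hcle i hi
        rw [div_le_one hpi]
        calc c * wt (P i) ψ ≤ (wt (P i) φ / wt (P i) ψ) * wt (P i) ψ :=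
              mul_le_mul_of_nonneg_right this hqi.le
        _ = wt (P i) φ := by field_simp
      have hnn := nsq_nonneg (P i *ᵥ x)
      rw [h1, h3]
      calc (c * wt (P i) ψ / wt (P i) φ) * ((wt (P i) φ)⁻¹
            * Complex.normSq (star (P i *ᵥ φ) ⬝ᵥ (P i *ᵥ x)))
          ≤ (c * wt (P i) ψ / wt (P i) φ) * ((wt (P i) φ)⁻¹ * (wt (P i) φ * nsq (P i *ᵥ x))) := by
            apply mul_le_mul_of_nonneg_left _ hratio
            exact mul_le_mul_of_nonneg_left h4 (inv_nonneg.mpr hpi.le)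
        _ = (c * wt (P i) ψ / wt (P i) φ) * nsq (P i *ᵥ x) := by
            rw [inv_mul_cancel_left₀ hpi.ne']
        _ ≤ 1 * nsq (P i *ᵥ x) := mul_le_mul_of_nonneg_right h5 hnn
        _ = nsq (P i *ᵥ x) := one_mul _
    calc ∑ i ∈ T, Complex.normSq
          (((Real.sqrt (c * wt (P i) ψ / wt (P i) φ) : ℝ) : ℂ) * (star (φE i) ⬝ᵥ x))
        ≤ ∑ i ∈ T, nsq (P i *ᵥ x) := Finset.sum_le_sum step
      _ ≤ ∑ i, nsq (P i *ᵥ x) :=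
          Finset.sum_le_sum_of_subset_of_nonneg (Finset.subset_univ T)
            (fun i _ _ => nsq_nonneg _)
      _ = nsq x := (hnsq_decomp x).symm
  -- M applied to φ
  have hcoef : ∀ i ∈ T, Real.sqrt (c * wt (P i) ψ / wt (P i) φ) * Real.sqrt (wt (P i) φ)
      * (Real.sqrt (wt (P i) ψ))⁻¹ = Real.sqrt c := by
    intro i hi
    have hpi := hp i hi
    have hqi := hq i hi
    have hratio : 0 ≤ c * wt (P i) ψ / wt (P i) φ :=
      div_nonneg (mul_nonneg hcpos.le hqi.le) hpi.le
    have h1 : Real.sqrt (c * wt (P i) ψ / wt (P i) φ) * Real.sqrt (wt (P i) φ)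
        = Real.sqrt (c * wt (P i) ψ) := by
      rw [← Real.sqrt_mul hratio, div_mul_cancel₀ _ hpi.ne']
    rw [h1, Real.sqrt_mul hcpos.le, mul_inv_cancel_right₀ (hsqq_ne i hi)]
  have hφEφ : ∀ i ∈ T, star (φE i) ⬝ᵥ φ = ((Real.sqrt (wt (P i) φ) : ℝ) : ℂ) := by
    intro i hi
    rw [hφEdef, hsd, map_inv₀, Complex.conj_ofReal, hPφφ]
    rw [← Complex.ofReal_inv, ← Complex.ofReal_mul, Complex.ofReal_inj]
    rw [← Real.mul_self_sqrt (hp i hi).le]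
    field_simp
    rw [Real.sqrt_sq (Real.sqrt_nonneg _), pow_two, mul_div_cancel_right₀ _ (hsqp_ne i hi)]
  have hMφ : M *ᵥ φ = ((Real.sqrt c : ℝ) : ℂ) • ∑ i ∈ T, P i *ᵥ ψ := by
    rw [hMx φ, Finset.smul_sum]
    refine Finset.sum_congr rfl fun i hi => ?_
    rw [hφEφ i hi, hψEdef, smul_smul]
    congr 1
    rw [← Complex.ofReal_mul, ← Complex.ofReal_inv, ← Complex.ofReal_mul, ← hcoef i hi,
      Complex.ofReal_mul, Complex.ofReal_mul, Complex.ofReal_inv]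
  have hχψ2 : star ψ ⬝ᵥ (∑ i ∈ T, P i *ᵥ ψ) = ((Fmax : ℝ) : ℂ) := by
    rw [dot_sum, hFdef, Complex.ofReal_sum]
    exact Finset.sum_congr rfl fun i _ => hψPψ i
  have hχstar : star (∑ i ∈ T, P i *ᵥ ψ) = ∑ i ∈ T, star (P i *ᵥ ψ) := star_sum _ _
  have hχψ1 : star (∑ i ∈ T, P i *ᵥ ψ) ⬝ᵥ ψ = ((Fmax : ℝ) : ℂ) := by
    rw [hχstar, sum_dot, hFdef, Complex.ofReal_sum]
    exact Finset.sum_congr rfl fun i _ => hPψψ i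
  have hχχ : star (∑ i ∈ T, P i *ᵥ ψ) ⬝ᵥ (∑ i ∈ T, P i *ᵥ ψ) = ((Fmax : ℝ) : ℂ) := by
    rw [hχstar, sum_dot, hFdef, Complex.ofReal_sum]
    refine Finset.sum_congr rfl fun i hi => ?_
    rw [dot_sum, Finset.sum_eq_single_of_mem i hi
      (fun j _ hji => hPO i j (fun h => hji h.symm) ψ ψ), hPwt]
  have hsqc : ((Real.sqrt c : ℝ) : ℂ) * ((Real.sqrt c : ℝ) : ℂ) = ((c : ℝ) : ℂ) := by
    rw [← Complex.ofReal_mul, Real.mul_self_sqrt hcpos.le]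
  have htrM : Matrix.trace (M * vecMulVec φ (star φ) * Mᴴ) = ((c * Fmax : ℝ) : ℂ) := by
    rw [sandwich, trace_vecMulVec', hMφ, hsd, hds, hχχ, Complex.conj_ofReal, ← mul_assoc, hsqc,
      ← Complex.ofReal_mul]
  have hnumM : star ψ ⬝ᵥ ((M * vecMulVec φ (star φ) * Mᴴ) *ᵥ ψ)
      = ((c * Fmax * Fmax : ℝ) : ℂ) := by
    rw [sandwich, vecMulVec_mulVec', hds, hMφ, hsd, hds, hχψ1, hχψ2, Complex.conj_ofReal]
    push_cast
    linear_combination ((Fmax : ℝ) : ℂ)^2 * hsqc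
  -- commutation of M with H
  have hHφE : ∀ i, H *ᵥ (φE i) = ((E i : ℝ) : ℂ) • φE i := by
    intro i
    rw [hφEdef, mulVec_smul, mulVec_mulVec, hHP i, smul_mulVec, smul_comm]
  have hHψE : ∀ i, H *ᵥ (ψE i) = ((E i : ℝ) : ℂ) • ψE i := by
    intro i
    rw [hψEdef, mulVec_smul, mulVec_mulVec, hHP i, smul_mulVec, smul_comm]
  have hMHcomm : M * H = H * M := by
    rw [hMdef, Finset.sum_mul, Finset.mul_sum]
    refine Finset.sum_congr rfl fun i hi => ?_
    rw [Matrix.smul_mul, Matrix.mul_smul]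
    have hl : star (φE i) ᵥ* H = star (H *ᵥ φE i) := by
      have h := star_mulVec H (φE i)
      rw [hH] at h
      exact h.symm
    have lhs : vecMulVec (ψE i) (star (φE i)) * H
        = ((E i : ℝ) : ℂ) • vecMulVec (ψE i) (star (φE i)) := by
      rw [_root_.vecMulVec_mul, hl, hHφE i, star_smul, RCLike.star_def, Complex.conj_ofReal,
        vecMulVec_smul_right]
    have rhs : H * vecMulVec (ψE i) (star (φE i))
        = ((E i : ℝ) : ℂ) • vecMulVec (ψE i) (star (φE i)) := by
      rw [_root_.mul_vecMulVec, hHψE i, smul_vecMulVec_left]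
    rw [lhs, rhs]
  have hi0T' : i0 ∈ T := hi0T
  refine ⟨?_, posSemidef_iff_dotProduct_mulVec.mpr ⟨?_, ?_⟩, hMHcomm, ?_, htrM⟩
  · -- Part (i): optimality
    intro K N hsub hNH hpos hfid
    have hNP : ∀ k i, N k * P i = P i * N k := fun k => hcommP (N k) (hNH k)
    have htr : Matrix.trace (∑ k, N k * vecMulVec φ (star φ) * (N k)ᴴ)
        = ((∑ k, nsq (N k *ᵥ φ) : ℝ) : ℂ) := by
      rw [Matrix.trace_sum, Complex.ofReal_sum]
      refine Finset.sum_congr rfl fun k _ => ?_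
      rw [sandwich, trace_vecMulVec', dot_self_eq_nsq]
    have hnum : star ψ ⬝ᵥ ((∑ k, N k * vecMulVec φ (star φ) * (N k)ᴴ) *ᵥ ψ)
        = ((∑ k, Complex.normSq (star ψ ⬝ᵥ (N k *ᵥ φ)) : ℝ) : ℂ) := by
      rw [sum_mulVec', dot_sum, Complex.ofReal_sum]
      refine Finset.sum_congr rfl fun k _ => ?_
      rw [sandwich, vecMulVec_mulVec', hds, Matrix.star_dotProduct, RCLike.star_def,
        ← Complex.normSq_eq_conj_mul_self]
    set s : ℝ := ∑ k, nsq (N k *ᵥ φ) with hsdef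
    set num : ℝ := ∑ k, Complex.normSq (star ψ ⬝ᵥ (N k *ᵥ φ)) with hnumdef
    have hspos : 0 < s := by
      rw [htr] at hpos
      exact_mod_cast hpos
    have hnum_eq : num = Fmax * s := by
      rw [htr, hnum] at hfid
      rw [div_eq_iff (by exact_mod_cast hspos.ne' : ((s : ℝ) : ℂ) ≠ 0)] at hfid
      have h : ((num : ℝ) : ℂ) = ((Fmax * s : ℝ) : ℂ) := by rw [hfid]; push_cast; ring
      exact_mod_cast h
    have hsubn : ∀ x : Fin d → ℂ, (∑ k, nsq (N k *ᵥ x)) ≤ nsq x := by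
      intro x
      have h0 := hsub.dotProduct_mulVec_nonneg x
      have hterm : ∀ k : Fin K, star x ⬝ᵥ (((N k)ᴴ * N k) *ᵥ x)
          = ((nsq (N k *ᵥ x) : ℝ) : ℂ) := by
        intro k
        rw [← mulVec_mulVec, ← star_mulVec_dot, dot_self_eq_nsq]
      have hrw : star x ⬝ᵥ (((1 : Matrix (Fin d) (Fin d) ℂ) - ∑ k, (N k)ᴴ * N k) *ᵥ x)
          = ((nsq x - ∑ k, nsq (N k *ᵥ x) : ℝ) : ℂ) := by
        rw [sub_mulVec, one_mulVec, dotProduct_sub, dot_self_eq_nsq, sum_mulVec', dot_sum,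
          Finset.sum_congr rfl (fun k _ => hterm k), ← Complex.ofReal_sum, ← Complex.ofReal_sub]
      rw [hrw] at h0
      have := Complex.zero_le_real.mp h0
      linarith
    set D : Fin K → ι → ℂ := fun k i => star (P i *ᵥ ψ) ⬝ᵥ (N k *ᵥ (P i *ᵥ φ)) with hD
    have hBdec : ∀ k, star ψ ⬝ᵥ (N k *ᵥ φ) = ∑ i ∈ T, D k i := by
      intro k
      have h1 : star ψ ⬝ᵥ (N k *ᵥ φ) = ∑ i, D k i := by
        calc star ψ ⬝ᵥ (N k *ᵥ φ) = star (∑ i, P i *ᵥ ψ) ⬝ᵥ (N k *ᵥ φ) := by rw [hres]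
        _ = ∑ i, star (P i *ᵥ ψ) ⬝ᵥ (N k *ᵥ φ) := by rw [star_sum, sum_dot]
        _ = ∑ i, D k i := by
          refine Finset.sum_congr rfl fun i _ => ?_
          simp only [hD]
          rw [hPdotL i ψ, hPdotL i ψ]
          congr 1
          rw [mulVec_mulVec, mulVec_mulVec, mulVec_mulVec]
          congr 1
          rw [← hNP k i, mul_assoc, hIdem i]
      refine h1.trans (Finset.sum_subset (Finset.subset_univ T) fun i _ hiT => ?_).symm
      have hor : wt (P i) φ = 0 ∨ wt (P i) ψ = 0 := by
        by_contra hcon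
        push_neg at hcon
        exact hiT ((hTmem i).mpr ⟨hcon.1, hcon.2⟩)
      simp only [hD]
      rcases hor with h | h
      · rw [hwtzero i φ h, mulVec_zero, dotProduct_zero]
      · rw [hwtzero i ψ h, star_zero, zero_dotProduct]
    set f : ι → ℂ := fun i => ((Real.sqrt (wt (P i) ψ) : ℝ) : ℂ) with hf
    set g : Fin K → ι → ℂ := fun k i => ((Real.sqrt (wt (P i) ψ) : ℂ))⁻¹ * D k i with hg
    have hfg : ∀ k, ∀ i ∈ T, (starRingEnd ℂ) (f i) * g k i = D k i := by
      intro k i hi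
      simp only [hf, hg]
      rw [Complex.conj_ofReal, ← mul_assoc, ← Complex.ofReal_inv, ← Complex.ofReal_mul,
        mul_inv_cancel₀ (hsqq_ne i hi), Complex.ofReal_one, one_mul]
    have hAf : ∑ i ∈ T, Complex.normSq (f i) = Fmax := by
      rw [hFdef]
      refine Finset.sum_congr rfl fun i hi => ?_
      simp only [hf]
      rw [Complex.normSq_ofReal, Real.mul_self_sqrt (hq i hi).le]
    have hB : ∀ k, ∑ i ∈ T, (starRingEnd ℂ) (f i) * g k i = star ψ ⬝ᵥ (N k *ᵥ φ) := by
      intro k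
      rw [hBdec k]
      exact Finset.sum_congr rfl (hfg k)
    set G : Fin K → ℝ := fun k => ∑ i ∈ T, Complex.normSq (g k i) with hG
    have hCS : ∀ k, Complex.normSq (star ψ ⬝ᵥ (N k *ᵥ φ)) ≤ Fmax * G k := by
      intro k
      rw [← hB k, ← hAf]
      exact cs_ineq T f (g k)
    have hDcs : ∀ k, ∀ i ∈ T, Complex.normSq (D k i)
        ≤ wt (P i) ψ * nsq (N k *ᵥ (P i *ᵥ φ)) := by
      intro k i hi
      have h := dot_cs (P i *ᵥ ψ) (N k *ᵥ (P i *ᵥ φ))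
      rw [← wt_eq] at h
      exact h
    have hGle : ∀ k, G k ≤ ∑ i ∈ T, nsq (N k *ᵥ (P i *ᵥ φ)) := by
      intro k
      refine Finset.sum_le_sum fun i hi => ?_
      have hqi := hq i hi
      have h1 : Complex.normSq (g k i) = (wt (P i) ψ)⁻¹ * Complex.normSq (D k i) := by
        simp only [hg]
        rw [Complex.normSq_mul, Complex.normSq_inv, Complex.normSq_ofReal,
          Real.mul_self_sqrt hqi.le]
      rw [h1]
      calc (wt (P i) ψ)⁻¹ * Complex.normSq (D k i)
          ≤ (wt (P i) ψ)⁻¹ * (wt (P i) ψ * nsq (N k *ᵥ (P i *ᵥ φ))) :=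
            mul_le_mul_of_nonneg_left (hDcs k i hi) (inv_nonneg.mpr hqi.le)
        _ = nsq (N k *ᵥ (P i *ᵥ φ)) := by rw [inv_mul_cancel_left₀ hqi.ne']
    have hsplit : ∀ k, ∑ i ∈ T, nsq (N k *ᵥ (P i *ᵥ φ)) ≤ nsq (N k *ᵥ φ) := by
      intro k
      have hdec : nsq (N k *ᵥ φ) = ∑ i, nsq (N k *ᵥ (P i *ᵥ φ)) := by
        rw [hnsq_decomp (N k *ᵥ φ)]
        refine Finset.sum_congr rfl fun i _ => ?_
        congr 1
        rw [mulVec_mulVec, mulVec_mulVec, hNP k i]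
      rw [hdec]
      exact Finset.sum_le_sum_of_subset_of_nonneg (Finset.subset_univ T)
        (fun _ _ _ => nsq_nonneg _)
    have hGsum : ∑ k, G k ≤ s := by
      rw [hsdef]
      exact Finset.sum_le_sum fun k _ => le_trans (hGle k) (hsplit k)
    have hzero : ∀ k : Fin K, Fmax * G k - Complex.normSq (star ψ ⬝ᵥ (N k *ᵥ φ)) = 0 := by
      have hsum_le : ∑ k, (Fmax * G k - Complex.normSq (star ψ ⬝ᵥ (N k *ᵥ φ))) ≤ 0 := by
        rw [Finset.sum_sub_distrib, ← Finset.mul_sum, ← hnumdef]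
        have h1 : Fmax * (∑ k, G k) ≤ Fmax * s := mul_le_mul_of_nonneg_left hGsum hFpos.le
        rw [hnum_eq]
        linarith
      have hsum_ge : (0:ℝ) ≤ ∑ k, (Fmax * G k - Complex.normSq (star ψ ⬝ᵥ (N k *ᵥ φ))) :=
        Finset.sum_nonneg fun k _ => sub_nonneg.mpr (hCS k)
      have heq0 := le_antisymm hsum_le hsum_ge
      intro k
      exact (Finset.sum_eq_zero_iff_of_nonneg
        (fun k _ => sub_nonneg.mpr (hCS k))).mp heq0 k (Finset.mem_univ k)
    have hFne : (∑ i ∈ T, Complex.normSq (f i)) ≠ 0 := by rw [hAf]; exact hFpos.ne'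
    have hgi0 : ∀ k, ((Fmax : ℝ) : ℂ) * g k i0 = (star ψ ⬝ᵥ (N k *ᵥ φ)) * f i0 := by
      intro k
      have heqk : Complex.normSq (∑ j ∈ T, (starRingEnd ℂ) (f j) * g k j)
          = (∑ j ∈ T, Complex.normSq (f j)) * (∑ j ∈ T, Complex.normSq (g k j)) := by
        rw [hB k, hAf]
        have h := hzero k
        have hGk : ∑ j ∈ T, Complex.normSq (g k j) = G k := rfl
        rw [hGk]
        linarith
      have h := cs_eq_case T f (g k) hFne heqk i0 hi0T'
      rw [hAf, hB k] at h
      exact h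
    have hq0sq : ((Real.sqrt (wt (P i0) ψ) : ℝ) : ℂ) * ((Real.sqrt (wt (P i0) ψ) : ℝ) : ℂ)
        = ((wt (P i0) ψ : ℝ) : ℂ) := by
      rw [← Complex.ofReal_mul, Real.mul_self_sqrt (hq i0 hi0T').le]
    have hFD : ∀ k, ((Fmax : ℝ) : ℂ) * D k i0
        = (star ψ ⬝ᵥ (N k *ᵥ φ)) * ((wt (P i0) ψ : ℝ) : ℂ) := by
      intro k
      have h2 : D k i0 = (starRingEnd ℂ) (f i0) * g k i0 := (hfg k i0 hi0T').symm
      calc ((Fmax : ℝ) : ℂ) * D k i0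
          = (starRingEnd ℂ) (f i0) * (((Fmax : ℝ) : ℂ) * g k i0) := by rw [h2]; ring
        _ = (starRingEnd ℂ) (f i0) * ((star ψ ⬝ᵥ (N k *ᵥ φ)) * f i0) := by rw [hgi0 k]
        _ = (star ψ ⬝ᵥ (N k *ᵥ φ)) * ((starRingEnd ℂ) (f i0) * f i0) := by ring
        _ = (star ψ ⬝ᵥ (N k *ᵥ φ)) * ((wt (P i0) ψ : ℝ) : ℂ) := by
            simp only [hf]
            rw [Complex.conj_ofReal, hq0sq]
    have hkey : ∀ k, Complex.normSq (star ψ ⬝ᵥ (N k *ᵥ φ)) * (wt (P i0) ψ) * (wt (P i0) ψ)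
        ≤ Fmax * Fmax * (wt (P i0) ψ * nsq (N k *ᵥ (P i0 *ᵥ φ))) := by
      intro k
      have h1 := congrArg Complex.normSq (hFD k)
      rw [Complex.normSq_mul, Complex.normSq_mul, Complex.normSq_ofReal,
        Complex.normSq_ofReal] at h1
      have h2 := hDcs k i0 hi0T'
      nlinarith [h1, h2, Complex.normSq_nonneg (star ψ ⬝ᵥ (N k *ᵥ φ)), hFpos,
        hq i0 hi0T', nsq_nonneg (N k *ᵥ (P i0 *ᵥ φ))]
    have hq0pos := hq i0 hi0T'
    have hp0 : nsq (P i0 *ᵥ φ) = wt (P i0) φ := (wt_eq _ _).symm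
    have hsumkey : num * (wt (P i0) ψ) * (wt (P i0) ψ)
        ≤ Fmax * Fmax * (wt (P i0) ψ * wt (P i0) φ) := by
      have h1 : ∑ k, Complex.normSq (star ψ ⬝ᵥ (N k *ᵥ φ)) * (wt (P i0) ψ) * (wt (P i0) ψ)
          ≤ ∑ k, Fmax * Fmax * (wt (P i0) ψ * nsq (N k *ᵥ (P i0 *ᵥ φ))) :=
        Finset.sum_le_sum fun k _ => hkey k
      have h2 := hsubn (P i0 *ᵥ φ)
      rw [hp0] at h2
      calc num * (wt (P i0) ψ) * (wt (P i0) ψ)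
          = ∑ k, Complex.normSq (star ψ ⬝ᵥ (N k *ᵥ φ)) * (wt (P i0) ψ) * (wt (P i0) ψ) := by
            rw [hnumdef, Finset.sum_mul, Finset.sum_mul]
        _ ≤ ∑ k, Fmax * Fmax * (wt (P i0) ψ * nsq (N k *ᵥ (P i0 *ᵥ φ))) := h1
        _ = Fmax * Fmax * (wt (P i0) ψ * ∑ k, nsq (N k *ᵥ (P i0 *ᵥ φ))) := by
            simp only [Finset.mul_sum]
        _ ≤ Fmax * Fmax * (wt (P i0) ψ * wt (P i0) φ) := by
            apply mul_le_mul_of_nonneg_left _ (mul_nonneg hFpos.le hFpos.le)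
            exact mul_le_mul_of_nonneg_left h2 hq0pos.le
    have hslec : s ≤ c * Fmax := by
      rw [hc0']
      rw [hnum_eq] at hsumkey
      rw [div_mul_eq_mul_div, le_div_iff₀ hq0pos]
      nlinarith [hsumkey, hFpos, hq0pos, hspos, mul_pos hFpos hq0pos]
    rw [htr]
    exact Complex.real_le_real.mpr hslec
  · -- 1 - MᴴM is Hermitian
    exact (Matrix.isHermitian_one).sub (Matrix.isHermitian_conjTranspose_mul_self M)
  · -- positivity
    intro x
    have hrw : star x ⬝ᵥ (((1 : Matrix (Fin d) (Fin d) ℂ) - Mᴴ * M) *ᵥ x)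
        = ((nsq x - nsq (M *ᵥ x) : ℝ) : ℂ) := by
      rw [sub_mulVec, one_mulVec, dotProduct_sub, dot_self_eq_nsq, ← mulVec_mulVec,
        ← star_mulVec_dot, dot_self_eq_nsq, ← Complex.ofReal_sub]
    rw [hrw]
    exact Complex.zero_le_real.mpr (sub_nonneg.mpr (hMxle x))
  · -- fidelity of M
    rw [hnumM, htrM, ← Complex.ofReal_div, Complex.ofReal_inj]
    have h : c * Fmax ≠ 0 := (mul_pos hcpos hFpos).ne'
    field_simp
end

section
/- Let S be a finite nonempty set and p, q : S → ℝ with p_E > 0, q_E > 0 for all E ∈ S and ∑_{E∈S} p_E = 1. Let r_1 < r_2 < … < r_L be the distinct values of E ↦ p_E/q_E, set r_0 = 0, R_i = {E ∈ S : p_E/q_E = r_i}, U_0 = ∅, and U_k = R_1 ∪ … ∪ R_k. Define p^{(1)} = p and recursively, for i ≥ 1: m_i = min{ p^{(i)}_E / q_E : E ∈ supp p^{(i)} } and p^{(i+1)}_E = ( p^{(i)}_E − m_i q_E ) / ( 1 − m_i ∑_{E' ∈ supp p^{(i)}} q_{E'} ) for E ∈ supp p^{(i)}, with p^{(i+1)}_E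 = 0 otherwise. Then for every k = 1, …, L: (i) supp p^{(k)} = S ∖ U_{k−1}; (ii) p^{(k)}_E = ( p_E − r_{k−1} q_E ) / ( 1 − ∑_{E'∈U_{k−1}} p_{E'} − r_{k−1} ∑_{E'∈S∖U_{k−1}} q_{E'} ) for every E ∈ S ∖ U_{k−1}, the denominator being strictly positive; and (iii) the set of minimizers { E ∈ supp p^{(k)} : p^{(k)}_E/q_E = m_k } equals R_k. -/
open scoped Classical

/-- The minimum (infimum) of the ratios `pp E / q E` over the support of `pp`. -/
noncomputable def minRatio {S : Type*} (q pp : S → ℝ) : ℝ :=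
  sInf {x : ℝ | ∃ E, pp E ≠ 0 ∧ x = pp E / q E}

/-- One step of the recursive filtering protocol: subtract `m·q` from the current distribution
`pp` on its support (where `m` is the minimal ratio `pp/q` on the support) and renormalize. -/
noncomputable def nextDist {S : Type*} [Fintype S] (q pp : S → ℝ) : S → ℝ := fun E =>
  if pp E ≠ 0 then
    (pp E - minRatio q pp * q E) /
      (1 - minRatio q pp * ∑ E' ∈ Finset.univ.filter (fun E' => pp E' ≠ 0), q E')
  else 0

/-- The sequence of energy distributions of the failure branches: `pseq p q 0 = p = p⁽¹⁾` and
`pseq p q i = p⁽ⁱ⁺¹⁾`. -/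
noncomputable def pseq {S : Type*} [Fintype S] (p q : S → ℝ) : ℕ → S → ℝ
  | 0 => p
  | (i + 1) => nextDist q (pseq p q i)

namespace Stmt12Aux

variable {S : Type} [Fintype S]

/-- membership predicate of U_n -/
def PP (p q : S → ℝ) (r : ℕ → ℝ) (n : ℕ) (E : S) : Prop :=
  ∃ i, 1 ≤ i ∧ i ≤ n ∧ p E / q E = r i

/-- the denominator -/
noncomputable def DD (p q : S → ℝ) (r : ℕ → ℝ) (n : ℕ) : ℝ :=
  1 - (∑ E ∈ Finset.univ.filter (fun E => PP p q r n E), p E)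
    - r n * ∑ E ∈ Finset.univ.filter (fun E => ¬ PP p q r n E), q E

variable (p q : S → ℝ) (L : ℕ) (r : ℕ → ℝ)

lemma PP_mono {n : ℕ} {E : S} (h : PP p q r n E) : PP p q r (n + 1) E := by
  obtain ⟨i, h1, h2, h3⟩ := h; exact ⟨i, h1, by omega, h3⟩

lemma exists_ge (hvals : ∀ E, ∃ i, 1 ≤ i ∧ i ≤ L ∧ p E / q E = r i)
    {n : ℕ} {E : S} (h : ¬ PP p q r n E) :
    ∃ i, n + 1 ≤ i ∧ i ≤ L ∧ p E / q E = r i := by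
  obtain ⟨i, h1, hL, he⟩ := hvals E
  refine ⟨i, ?_, hL, he⟩
  by_contra hc
  exact h ⟨i, h1, by omega, he⟩

lemma ratio_gt (hmono : ∀ i j, i < j → j ≤ L → r i < r j)
    (hvals : ∀ E, ∃ i, 1 ≤ i ∧ i ≤ L ∧ p E / q E = r i)
    {n : ℕ} {E : S} (h : ¬ PP p q r n E) : r n < p E / q E := by
  obtain ⟨i, h1, hL, he⟩ := exists_ge p q L r hvals h
  rw [he]; exact hmono n i (by omega) hL

lemma ratio_ge (hmono : ∀ i j, i < j → j ≤ L → r i < r j)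
    (hvals : ∀ E, ∃ i, 1 ≤ i ∧ i ≤ L ∧ p E / q E = r i)
    {n : ℕ} {E : S} (h : ¬ PP p q r n E) : r (n + 1) ≤ p E / q E := by
  obtain ⟨i, h1, hL, he⟩ := exists_ge p q L r hvals h
  rw [he]
  rcases eq_or_lt_of_le h1 with h | h
  · rw [h]
  · exact le_of_lt (hmono (n + 1) i h hL)

lemma exists_not (hmono : ∀ i j, i < j → j ≤ L → r i < r j)
    (hLvals : ∀ i, 1 ≤ i → i ≤ L → ∃ E, p E / q E = r i)
    {n : ℕ} (hn : n + 1 ≤ L) :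
    ∃ E, ¬ PP p q r n E ∧ p E / q E = r (n + 1) := by
  obtain ⟨E, hE⟩ := hLvals (n + 1) (by omega) hn
  refine ⟨E, ?_, hE⟩
  rintro ⟨i, h1, h2, he⟩
  have := hmono i (n + 1) (by omega) hn
  rw [← hE, he] at this
  exact lt_irrefl _ this

lemma DD_sum (hsum : ∑ E, p E = 1) (n : ℕ) :
    DD p q r n = ∑ E ∈ Finset.univ.filter (fun E => ¬ PP p q r n E),
      (p E - r n * q E) := by
  have h1 : (∑ E ∈ Finset.univ.filter (fun E => PP p q r n E), p E)
      + (∑ E ∈ Finset.univ.filter (fun E => ¬ PP p q r n E), p E) = 1 := by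
    rw [Finset.sum_filter_add_sum_filter_not]; exact hsum
  unfold DD
  rw [Finset.sum_sub_distrib, ← Finset.mul_sum]
  linarith

lemma DD_pos (hq : ∀ E, 0 < q E) (hsum : ∑ E, p E = 1)
    (hmono : ∀ i j, i < j → j ≤ L → r i < r j)
    (hvals : ∀ E, ∃ i, 1 ≤ i ∧ i ≤ L ∧ p E / q E = r i)
    (hLvals : ∀ i, 1 ≤ i → i ≤ L → ∃ E, p E / q E = r i)
    {n : ℕ} (hn : n + 1 ≤ L) : 0 < DD p q r n := by
  rw [DD_sum p q r hsum n]
  apply Finset.sum_pos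
  · intro E hE
    rw [Finset.mem_filter] at hE
    have h := ratio_gt p q L r hmono hvals hE.2
    have hqE := hq E
    rw [lt_div_iff₀ hqE] at h
    linarith
  · obtain ⟨E, hPE, _⟩ := exists_not p q L r hmono hLvals hn
    exact ⟨E, Finset.mem_filter.mpr ⟨Finset.mem_univ E, hPE⟩⟩

lemma sum_shift (hq : ∀ E, 0 < q E) (hmono : ∀ i j, i < j → j ≤ L → r i < r j) (n : ℕ) :
    ∑ E ∈ Finset.univ.filter (fun E => ¬ PP p q r n E), (p E - r (n + 1) * q E)
    = ∑ E ∈ Finset.univ.filter (fun E => ¬ PP p q r (n + 1) E),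
        (p E - r (n + 1) * q E) := by
  rw [Finset.sum_filter, Finset.sum_filter]
  apply Finset.sum_congr rfl
  intro E _
  by_cases h1 : PP p q r n E
  · rw [if_neg (not_not_intro h1), if_neg (not_not_intro (PP_mono p q r h1))]
  · by_cases h2 : PP p q r (n + 1) E
    · obtain ⟨i, hi1, hi2, he⟩ := h2
      have hieq : i = n + 1 := by
        by_contra hne
        exact h1 ⟨i, hi1, by omega, he⟩
      subst hieq
      have hpE : p E = r (n + 1) * q E := (div_eq_iff (hq E).ne').mp he
      rw [if_pos h1, if_neg (not_not_intro ⟨n + 1, hi1, le_refl _, he⟩), hpE]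
      ring
    · rw [if_pos h1, if_pos h2]

lemma DD_step (hq : ∀ E, 0 < q E) (hsum : ∑ E, p E = 1)
    (hmono : ∀ i j, i < j → j ≤ L → r i < r j) (n : ℕ) :
    DD p q r n - (r (n + 1) - r n)
        * (∑ E ∈ Finset.univ.filter (fun E => ¬ PP p q r n E), q E)
      = DD p q r (n + 1) := by
  rw [DD_sum p q r hsum n, DD_sum p q r hsum (n + 1),
    ← sum_shift p q L r hq hmono n, Finset.mul_sum, ← Finset.sum_sub_distrib]
  apply Finset.sum_congr rfl
  intro E _
  ring


lemma ratio_formula (hq : ∀ E, 0 < q E) {n : ℕ} {E : S}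
    (hD : DD p q r n ≠ 0)
    (hf : pseq p q n E = if PP p q r n E then 0
      else (p E - r n * q E) / DD p q r n)
    (hP : ¬ PP p q r n E) :
    pseq p q n E / q E = (p E / q E - r n) / DD p q r n := by
  rw [hf, if_neg hP]
  have hqE := (hq E).ne'
  field_simp

lemma supp_iff (hq : ∀ E, 0 < q E) (hsum : ∑ E, p E = 1)
    (hmono : ∀ i j, i < j → j ≤ L → r i < r j)
    (hvals : ∀ E, ∃ i, 1 ≤ i ∧ i ≤ L ∧ p E / q E = r i)
    (hLvals : ∀ i, 1 ≤ i → i ≤ L → ∃ E, p E / q E = r i)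
    {n : ℕ} (hn : n + 1 ≤ L) {E : S}
    (hf : pseq p q n E = if PP p q r n E then 0
      else (p E - r n * q E) / DD p q r n) :
    pseq p q n E ≠ 0 ↔ ¬ PP p q r n E := by
  have hD := DD_pos p q L r hq hsum hmono hvals hLvals hn
  constructor
  · intro hne hP
    rw [hf, if_pos hP] at hne
    exact hne rfl
  · intro hP
    rw [hf, if_neg hP]
    have h := ratio_gt p q L r hmono hvals hP
    rw [lt_div_iff₀ (hq E)] at h
    have hnum : 0 < p E - r n * q E := by linarith
    positivity

lemma minRatio_eq (hq : ∀ E, 0 < q E) (hsum : ∑ E, p E = 1)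
    (hmono : ∀ i j, i < j → j ≤ L → r i < r j)
    (hvals : ∀ E, ∃ i, 1 ≤ i ∧ i ≤ L ∧ p E / q E = r i)
    (hLvals : ∀ i, 1 ≤ i → i ≤ L → ∃ E, p E / q E = r i)
    {n : ℕ} (hn : n + 1 ≤ L)
    (hf : ∀ E, pseq p q n E = if PP p q r n E then 0
      else (p E - r n * q E) / DD p q r n) :
    minRatio q (pseq p q n) = (r (n + 1) - r n) / DD p q r n := by
  have hD := DD_pos p q L r hq hsum hmono hvals hLvals hn
  apply IsLeast.csInf_eq
  constructor
  · obtain ⟨E, hPE, hE⟩ := exists_not p q L r hmono hLvals hn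
    refine ⟨E, (supp_iff p q L r hq hsum hmono hvals hLvals hn (hf E)).mpr hPE, ?_⟩
    rw [ratio_formula p q r hq hD.ne' (hf E) hPE, hE]
  · rintro x ⟨E, hne, rfl⟩
    have hPE := (supp_iff p q L r hq hsum hmono hvals hLvals hn (hf E)).mp hne
    rw [ratio_formula p q r hq hD.ne' (hf E) hPE]
    have hge := ratio_ge p q L r hmono hvals hPE
    rw [div_le_div_iff₀ hD hD]
    have : r (n + 1) - r n ≤ p E / q E - r n := by linarith
    nlinarith


lemma Inv (hq : ∀ E, 0 < q E) (hsum : ∑ E, p E = 1) (hr0 : r 0 = 0)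
    (hmono : ∀ i j, i < j → j ≤ L → r i < r j)
    (hvals : ∀ E, ∃ i, 1 ≤ i ∧ i ≤ L ∧ p E / q E = r i)
    (hLvals : ∀ i, 1 ≤ i → i ≤ L → ∃ E, p E / q E = r i) :
    ∀ n, n + 1 ≤ L → ∀ E, pseq p q n E =
      if PP p q r n E then 0 else (p E - r n * q E) / DD p q r n := by
  intro n
  induction n with
  | zero =>
    intro _ E
    have hP : ¬ PP p q r 0 E := by rintro ⟨i, h1, h2, _⟩; omega
    have hB : Finset.univ.filter (fun E : S => PP p q r 0 E) = (∅ : Finset S) := by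
      ext E'
      simp only [Finset.mem_filter, Finset.notMem_empty, iff_false, not_and]
      rintro _ ⟨i, h1, h2, _⟩; omega
    have hD : DD p q r 0 = 1 := by
      unfold DD; rw [hB, hr0]; simp
    rw [hD, if_neg hP, hr0]
    simp [pseq]
  | succ n ih =>
    intro hn1 E
    have hn : n + 1 ≤ L := by omega
    have hf := ih hn
    have hD := DD_pos p q L r hq hsum hmono hvals hLvals hn
    have hD2 := DD_pos p q L r hq hsum hmono hvals hLvals hn1
    have hm := minRatio_eq p q L r hq hsum hmono hvals hLvals hn hf
    have hfil : Finset.univ.filter (fun E' => pseq p q n E' ≠ 0)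
        = Finset.univ.filter (fun E' => ¬ PP p q r n E') := by
      ext E'
      simp only [Finset.mem_filter, Finset.mem_univ, true_and]
      exact supp_iff p q L r hq hsum hmono hvals hLvals hn (hf E')
    show nextDist q (pseq p q n) E = _
    by_cases hP : PP p q r n E
    · have h0 : pseq p q n E = 0 := by rw [hf E, if_pos hP]
      unfold nextDist
      rw [if_neg (by simp [h0]), if_pos (PP_mono p q r hP)]
    · have hne : pseq p q n E ≠ 0 :=
        (supp_iff p q L r hq hsum hmono hvals hLvals hn (hf E)).mpr hP
      unfold nextDist
      rw [if_pos hne, hfil, hm, hf E, if_neg hP]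
      have hden : 1 - (r (n + 1) - r n) / DD p q r n
            * (∑ E' ∈ Finset.univ.filter (fun E' => ¬ PP p q r n E'), q E')
          = DD p q r (n + 1) / DD p q r n := by
        have hst := DD_step p q L r hq hsum hmono n
        field_simp
        linarith
      rw [hden]
      have hnum : (p E - r n * q E) / DD p q r n - (r (n + 1) - r n) / DD p q r n * q E
          = (p E - r (n + 1) * q E) / DD p q r n := by
        field_simp; ring
      rw [hnum]
      have hdd : (p E - r (n + 1) * q E) / DD p q r n / (DD p q r (n + 1) / DD p q r n)
          = (p E - r (n + 1) * q E) / DD p q r (n + 1) := by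
        rw [div_div_div_cancel_right₀]
        exact hD.ne'
      by_cases hP2 : PP p q r (n + 1) E
      · rw [if_pos hP2, hdd]
        obtain ⟨i, hi1, hi2, he⟩ := hP2
        have hieq : i = n + 1 := by
          by_contra hc
          exact hP ⟨i, hi1, by omega, he⟩
        subst hieq
        have hpE : p E = r (n + 1) * q E := (div_eq_iff (hq E).ne').mp he
        rw [hpE]
        simp
      · rw [if_neg hP2, hdd]

lemma min_iff (hq : ∀ E, 0 < q E) (hsum : ∑ E, p E = 1)
    (hmono : ∀ i j, i < j → j ≤ L → r i < r j)
    (hvals : ∀ E, ∃ i, 1 ≤ i ∧ i ≤ L ∧ p E / q E = r i)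
    (hLvals : ∀ i, 1 ≤ i → i ≤ L → ∃ E, p E / q E = r i)
    {n : ℕ} (hn : n + 1 ≤ L)
    (hf : ∀ E, pseq p q n E = if PP p q r n E then 0
      else (p E - r n * q E) / DD p q r n) (E : S) :
    (pseq p q n E ≠ 0 ∧ pseq p q n E / q E = minRatio q (pseq p q n))
      ↔ p E / q E = r (n + 1) := by
  have hD := DD_pos p q L r hq hsum hmono hvals hLvals hn
  have hDne := hD.ne'
  have hm := minRatio_eq p q L r hq hsum hmono hvals hLvals hn hf
  constructor
  · rintro ⟨hne, hmin⟩
    have hPE := (supp_iff p q L r hq hsum hmono hvals hLvals hn (hf E)).mp hne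
    rw [ratio_formula p q r hq hDne (hf E) hPE, hm] at hmin
    field_simp at hmin
    linarith
  · intro hE
    have hPE : ¬ PP p q r n E := by
      rintro ⟨i, h1, h2, he⟩
      have := hmono i (n + 1) (by omega) hn
      rw [← hE, he] at this
      exact lt_irrefl _ this
    refine ⟨(supp_iff p q L r hq hsum hmono hvals hLvals hn (hf E)).mpr hPE, ?_⟩
    rw [ratio_formula p q r hq hDne (hf E) hPE, hm, hE]

end Stmt12Aux

/-- **The failure-branch distributions of the optimal recursive protocol.** Let `p, q > 0` on a
finite nonempty `S` with `∑ p = 1`, let `0 = r 0` and `r 1 < … < r L` be the distinct values of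
`p/q`, with level sets `R i` and unions `U k = R 1 ∪ … ∪ R k`. Then for every `k = 1, …, L`:
(i) the support of `p⁽ᵏ⁾` is `S ∖ U (k-1)`; (ii) on that support
`p⁽ᵏ⁾ E = (p E − r (k−1) q E) / (1 − ∑_{U (k−1)} p − r (k−1) ∑_{S∖U (k−1)} q)`, the denominator
being positive; (iii) the minimizers of `p⁽ᵏ⁾/q` on the support are exactly `R k`. -/
theorem stmt_12 {S : Type} [Fintype S] [Nonempty S]
    (p q : S → ℝ) (hp : ∀ E, 0 < p E) (hq : ∀ E, 0 < q E)
    (hsum : ∑ E, p E = 1)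
    (L : ℕ) (r : ℕ → ℝ) (hr0 : r 0 = 0)
    (hmono : ∀ i j, i < j → j ≤ L → r i < r j)
    (hvals : ∀ E, ∃ i, 1 ≤ i ∧ i ≤ L ∧ p E / q E = r i)
    (hLvals : ∀ i, 1 ≤ i → i ≤ L → ∃ E, p E / q E = r i) :
    ∀ k, 1 ≤ k → k ≤ L →
      ((∀ E, pseq p q (k - 1) E ≠ 0 ↔ ¬ ∃ i, 1 ≤ i ∧ i ≤ k - 1 ∧ p E / q E = r i) ∧
       (0 < 1 - (∑ E ∈ Finset.univ.filter
              (fun E => ∃ i, 1 ≤ i ∧ i ≤ k - 1 ∧ p E / q E = r i), p E)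
            - r (k - 1) * ∑ E ∈ Finset.univ.filter
              (fun E => ¬ ∃ i, 1 ≤ i ∧ i ≤ k - 1 ∧ p E / q E = r i), q E) ∧
       (∀ E, (¬ ∃ i, 1 ≤ i ∧ i ≤ k - 1 ∧ p E / q E = r i) →
          pseq p q (k - 1) E =
            (p E - r (k - 1) * q E) /
              (1 - (∑ E' ∈ Finset.univ.filter
                  (fun E' => ∃ i, 1 ≤ i ∧ i ≤ k - 1 ∧ p E' / q E' = r i), p E')
                - r (k - 1) * ∑ E' ∈ Finset.univ.filter
                  (fun E' => ¬ ∃ i, 1 ≤ i ∧ i ≤ k - 1 ∧ p E' / q E' = r i), q E')) ∧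
       (∀ E, (pseq p q (k - 1) E ≠ 0 ∧
            pseq p q (k - 1) E / q E = minRatio q (pseq p q (k - 1))) ↔
          p E / q E = r k)) := by
  intro k hk1 hkL
  obtain ⟨n, rfl⟩ : ∃ n, k = n + 1 := ⟨k - 1, by omega⟩
  simp only [Nat.add_sub_cancel]
  have hn1 : n + 1 ≤ L := hkL
  have hf := Stmt12Aux.Inv p q L r hq hsum hr0 hmono hvals hLvals n hn1
  have hD := Stmt12Aux.DD_pos p q L r hq hsum hmono hvals hLvals hn1
  refine ⟨?_, hD, ?_, ?_⟩
  · intro E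
    exact Stmt12Aux.supp_iff p q L r hq hsum hmono hvals hLvals hn1 (hf E)
  · intro E hPE
    have h := hf E
    rw [if_neg (show ¬ Stmt12Aux.PP p q r n E from hPE)] at h
    exact h
  · intro E
    exact Stmt12Aux.min_iff p q L r hq hsum hmono hvals hLvals hn1 hf E
end

section
/- Let H be a Hermitian d×d matrix with spectral projections P_E, let ρ be a d×d density matrix (positive semidefinite with trace 1), let ψ ∈ ℂ^d be a unit vector, and set q_E = ‖P_E ψ‖² and ρ_{E,E'} = P_E ρ P_{E'}. Then for every quantum channel ℳ(σ) = ∑_k M_k σ M_k† whose Kraus operators all commute with H, the fidelity satisfies ⟨ψ| ℳ(ρ) |ψ⟩ ≤ ∑_{E,E'} √(q_E q_{E'}) · ‖ρ_{E,E'}‖₁, where the sums run over the eigenvalues of H and ‖X‖₁ = Tr[√(X†X)] is the trace norm. -/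
open Matrix
open scoped ComplexOrder

/-- The trace norm `‖X‖₁ = Tr[√(Xᴴ X)]`. -/
noncomputable def traceNorm {d : ℕ} (X : Matrix (Fin d) (Fin d) ℂ) : ℝ :=
  ((((Matrix.posSemidef_conjTranspose_mul_self X).1.eigenvectorUnitary : Matrix (Fin d) (Fin d) ℂ) *
      diagonal ((RCLike.ofReal : ℝ → ℂ) ∘ Real.sqrt ∘ (Matrix.posSemidef_conjTranspose_mul_self X).1.eigenvalues) *
      (star (Matrix.posSemidef_conjTranspose_mul_self X).1.eigenvectorUnitary :
        Matrix (Fin d) (Fin d) ℂ)).trace).re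


lemma dot_cs_s14 {d : ℕ} (a b : Fin d → ℂ) : ‖star a ⬝ᵥ b‖ ≤
    Real.sqrt ((star a ⬝ᵥ a).re) * Real.sqrt ((star b ⬝ᵥ b).re) := by
  have h1 : ∀ x y : Fin d → ℂ, star x ⬝ᵥ y
      = inner (𝕜 := ℂ) (WithLp.toLp 2 x) (WithLp.toLp 2 y) := by
    intro x y
    simp [dotProduct, PiLp.inner_apply, RCLike.inner_apply, mul_comm]
  have h2 : ∀ x : Fin d → ℂ, ‖(WithLp.toLp 2 x)‖ = Real.sqrt ((star x ⬝ᵥ x).re) := by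
    intro x
    rw [@norm_eq_sqrt_re_inner ℂ, h1]
    rfl
  rw [h1, ← h2, ← h2]
  exact norm_inner_le_norm _ _

lemma dot_shift {d : ℕ} (B C : Matrix (Fin d) (Fin d) ℂ) (u v : Fin d → ℂ) :
    star u ⬝ᵥ ((B * C) *ᵥ v) = star (Bᴴ *ᵥ u) ⬝ᵥ (C *ᵥ v) := by
  rw [star_mulVec, conjTranspose_conjTranspose, ← mulVec_mulVec, dotProduct_mulVec]

lemma dot_self_re_eq {d : ℕ} (u : Fin d → ℂ) :
    (star u ⬝ᵥ u).re = ∑ i, Complex.normSq (u i) := by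
  have : star u ⬝ᵥ u = ∑ i, (Complex.normSq (u i) : ℂ) := by
    simp [dotProduct, Complex.normSq_eq_conj_mul_self]
  rw [this, Complex.re_sum]
  simp only [Complex.ofReal_re]

lemma dot_self_re_nonneg {d : ℕ} (u : Fin d → ℂ) : 0 ≤ (star u ⬝ᵥ u).re := by
  rw [dot_self_re_eq]
  exact Finset.sum_nonneg fun _ _ => Complex.normSq_nonneg _

lemma psd_quad_le_trace {d : ℕ} {A : Matrix (Fin d) (Fin d) ℂ} (hA : A.PosSemidef)
    (u : Fin d → ℂ) : (star u ⬝ᵥ (A *ᵥ u)).re ≤ (star u ⬝ᵥ u).re * A.trace.re := by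
  obtain ⟨B, hBH, hBB⟩ : ∃ B : Matrix (Fin d) (Fin d) ℂ, Bᴴ = B ∧ B * B = A :=
    by
      obtain ⟨U, hU⟩ : ∃ U : Matrix (Fin d) (Fin d) ℂ,
          U = (hA.1.eigenvectorUnitary : Matrix (Fin d) (Fin d) ℂ) := ⟨_, rfl⟩
      have hUU : Uᴴ * U = 1 := by
        have h := Matrix.mem_unitaryGroup_iff'.mp hA.1.eigenvectorUnitary.2
        rwa [Matrix.star_eq_conjTranspose, ← hU] at h
      have hs := hA.1.spectral_theorem
      rw [Unitary.conjStarAlgAut_apply, Matrix.star_eq_conjTranspose, ← hU] at hs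
      refine ⟨U * diagonal (fun i => ((Real.sqrt (hA.1.eigenvalues i) : ℝ) : ℂ)) * Uᴴ, ?_, ?_⟩
      · rw [Matrix.conjTranspose_mul, Matrix.conjTranspose_mul, Matrix.conjTranspose_conjTranspose,
          Matrix.diagonal_conjTranspose, ← Matrix.mul_assoc]
        congr 2
        ext i j
        simp [Matrix.diagonal_apply]
      · refine Eq.trans ?_ hs.symm
        simp only [Matrix.mul_assoc]
        rw [← Matrix.mul_assoc Uᴴ U, hUU, Matrix.one_mul, ← Matrix.mul_assoc (diagonal _),
          diagonal_mul_diagonal]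
        congr 2
        ext i j
        simp only [Matrix.diagonal_apply, Function.comp_apply, ← Complex.ofReal_mul,
          Real.mul_self_sqrt (hA.eigenvalues_nonneg i)]
        rfl
  have h1 : star u ⬝ᵥ (A *ᵥ u) = star (B *ᵥ u) ⬝ᵥ (B *ᵥ u) := by
    rw [← hBB, dot_shift, hBH]
  have h3 : ∀ i, Complex.normSq ((B *ᵥ u) i) ≤ (∑ j, Complex.normSq (B i j)) * (star u ⬝ᵥ u).re := by
    intro i
    have hrowsum : (0:ℝ) ≤ ∑ j, Complex.normSq (B i j) :=
      Finset.sum_nonneg fun _ _ => Complex.normSq_nonneg _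
    have hBu : (B *ᵥ u) i = star (fun j => (starRingEnd ℂ) (B i j)) ⬝ᵥ u := by
      simp [Matrix.mulVec, dotProduct]
    have hcs := dot_cs_s14 (fun j => (starRingEnd ℂ) (B i j)) u
    have hrow : (star (fun j => (starRingEnd ℂ) (B i j)) ⬝ᵥ (fun j => (starRingEnd ℂ) (B i j))).re
        = ∑ j, Complex.normSq (B i j) := by
      rw [dot_self_re_eq]
      simp [Complex.normSq_conj]
    have habs : ‖(B *ᵥ u) i‖ ≤
        Real.sqrt (∑ j, Complex.normSq (B i j)) * Real.sqrt ((star u ⬝ᵥ u).re) := by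
      rw [hBu]; rw [hrow] at hcs; exact hcs
    have hsq := mul_le_mul habs habs (norm_nonneg _)
      (mul_nonneg (Real.sqrt_nonneg _) (Real.sqrt_nonneg _))
    calc Complex.normSq ((B *ᵥ u) i)
        = ‖(B *ᵥ u) i‖ * ‖(B *ᵥ u) i‖ := by
          rw [← Complex.sq_norm]; ring
      _ ≤ _ := hsq
      _ = (∑ j, Complex.normSq (B i j)) * (star u ⬝ᵥ u).re := by
          rw [mul_mul_mul_comm, Real.mul_self_sqrt hrowsum,
            Real.mul_self_sqrt (dot_self_re_nonneg u)]
  have h4 : A.trace.re = ∑ i, ∑ j, Complex.normSq (B i j) := by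
    have htr : A.trace = ∑ i, ∑ j, (Complex.normSq (B i j) : ℂ) := by
      rw [← hBB, Matrix.trace]
      congr 1
      ext i
      simp only [Matrix.diag, Matrix.mul_apply]
      congr 1
      ext j
      have hji : B j i = (starRingEnd ℂ) (B i j) := by
        conv_lhs => rw [← hBH]
        simp [Matrix.conjTranspose_apply]
      rw [hji, Complex.mul_conj]
    rw [htr, Complex.re_sum]
    simp [Complex.re_sum]
  calc (star u ⬝ᵥ (A *ᵥ u)).re = ∑ i, Complex.normSq ((B *ᵥ u) i) := by
        rw [h1, dot_self_re_eq]
    _ ≤ ∑ i, (∑ j, Complex.normSq (B i j)) * (star u ⬝ᵥ u).re :=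
        Finset.sum_le_sum fun i _ => h3 i
    _ = (star u ⬝ᵥ u).re * A.trace.re := by rw [h4, ← Finset.sum_mul]; ring

noncomputable def fnm {d : ℕ} (V : Matrix (Fin d) (Fin d) ℂ) (lam : Fin d → ℝ) (g : ℝ → ℝ) :
    Matrix (Fin d) (Fin d) ℂ :=
  V * Matrix.diagonal (fun i => (g (lam i) : ℂ)) * Vᴴ

variable {d : ℕ} {V : Matrix (Fin d) (Fin d) ℂ} {lam : Fin d → ℝ}

lemma fnm_mul (hV : Vᴴ * V = 1) (g h : ℝ → ℝ) :
    fnm V lam g * fnm V lam h = fnm V lam (fun t => g t * h t) := by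
  unfold fnm
  simp only [Matrix.mul_assoc]
  rw [← Matrix.mul_assoc Vᴴ V, hV, Matrix.one_mul, ← Matrix.mul_assoc (Matrix.diagonal _),
    Matrix.diagonal_mul_diagonal]
  congr 2
  funext i
  push_cast
  rfl

lemma fnm_conjTranspose (g : ℝ → ℝ) : (fnm V lam g)ᴴ = fnm V lam g := by
  unfold fnm
  have hD : (Matrix.diagonal fun i => (g (lam i) : ℂ))ᴴ = Matrix.diagonal fun i => (g (lam i) : ℂ) := by
    ext i j
    by_cases h : i = j <;>
      simp [Matrix.conjTranspose_apply, Matrix.diagonal_apply, h, Complex.conj_ofReal, eq_comm]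
  rw [Matrix.conjTranspose_mul, Matrix.conjTranspose_mul, hD,
    Matrix.conjTranspose_conjTranspose]
  exact (Matrix.mul_assoc _ _ _).symm

lemma fnm_congr (g h : ℝ → ℝ) (hg : ∀ i, g (lam i) = h (lam i)) : fnm V lam g = fnm V lam h := by
  unfold fnm
  have : (fun i => (g (lam i) : ℂ)) = fun i => (h (lam i) : ℂ) := by
    funext i; rw [hg i]
  rw [this]

lemma fnm_trace (hV : Vᴴ * V = 1) (g : ℝ → ℝ) :
    (fnm V lam g).trace = ∑ i, (g (lam i) : ℂ) := by
  unfold fnm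
  rw [Matrix.trace_mul_comm, ← Matrix.mul_assoc, hV, Matrix.one_mul, Matrix.trace_diagonal]

lemma fnm_one (hV2 : V * Vᴴ = 1) : fnm V lam (fun _ => 1) = 1 := by
  unfold fnm
  simp [hV2]

lemma fnm_zero : fnm V lam (fun _ => 0) = 0 := by
  unfold fnm
  simp

lemma fnm_sub (g h : ℝ → ℝ) :
    fnm V lam (fun t => g t - h t) = fnm V lam g - fnm V lam h := by
  unfold fnm
  have : (Matrix.diagonal fun i => ((g (lam i) - h (lam i) : ℝ) : ℂ))
      = Matrix.diagonal (fun i => (g (lam i) : ℂ)) - Matrix.diagonal (fun i => (h (lam i) : ℂ)) := by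
    ext i j
    by_cases h : i = j <;> simp [Matrix.diagonal_apply, h] <;> push_cast <;> ring
  rw [show (fun i => ((fun t => g t - h t) (lam i) : ℂ)) = fun i => ((g (lam i) - h (lam i) : ℝ) : ℂ) from rfl,
    this, Matrix.mul_sub V, Matrix.sub_mul]


lemma sum_mulVec'_s14 {d : ℕ} {κ : Type*} [Fintype κ] (C : κ → Matrix (Fin d) (Fin d) ℂ) (u : Fin d → ℂ) :
    (∑ k, C k) *ᵥ u = ∑ k, C k *ᵥ u := by
  ext i
  simp only [Matrix.mulVec, dotProduct, Finset.sum_apply, Matrix.sum_apply,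
    Finset.sum_mul]
  rw [Finset.sum_comm]

lemma dot_sum' {d : ℕ} {κ : Type*} [Fintype κ] (u : Fin d → ℂ) (w : κ → (Fin d → ℂ)) :
    star u ⬝ᵥ (∑ k, w k) = ∑ k, star u ⬝ᵥ w k := by
  simp only [dotProduct, Finset.sum_apply, Finset.mul_sum]
  rw [Finset.sum_comm]

lemma channel_psd {d K : ℕ} (M : Fin K → Matrix (Fin d) (Fin d) ℂ)
    {C : Matrix (Fin d) (Fin d) ℂ} (hC : C.PosSemidef) :
    (∑ k, M k * C * (M k)ᴴ).PosSemidef := by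
  refine Finset.sum_induction _ _ (fun a b ha hb => ha.add hb) Matrix.PosSemidef.zero ?_
  intro k _
  exact hC.mul_mul_conjTranspose_same (M k)

lemma channel_trace {d K : ℕ} (M : Fin K → Matrix (Fin d) (Fin d) ℂ)
    (hTP : ∑ k, (M k)ᴴ * M k = 1) (C : Matrix (Fin d) (Fin d) ℂ) :
    (∑ k, M k * C * (M k)ᴴ).trace = C.trace := by
  rw [Matrix.trace_sum]
  have h : ∀ k : Fin K, (M k * C * (M k)ᴴ).trace = ((M k)ᴴ * M k * C).trace := by
    intro k
    rw [Matrix.trace_mul_comm, ← Matrix.mul_assoc]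
  simp_rw [h]
  rw [← Matrix.trace_sum, ← Finset.sum_mul, hTP, Matrix.one_mul]

lemma sum_sqrt_mul_sqrt_le {K : ℕ} (f g : Fin K → ℝ) (hf : ∀ k, 0 ≤ f k) (hg : ∀ k, 0 ≤ g k) :
    ∑ k, Real.sqrt (f k) * Real.sqrt (g k) ≤ Real.sqrt (∑ k, f k) * Real.sqrt (∑ k, g k) := by
  have h := Finset.sum_mul_sq_le_sq_mul_sq Finset.univ
    (fun k => Real.sqrt (f k)) (fun k => Real.sqrt (g k))
  have hf' : ∀ k, Real.sqrt (f k) ^ 2 = f k := fun k => Real.sq_sqrt (hf k)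
  have hg' : ∀ k, Real.sqrt (g k) ^ 2 = g k := fun k => Real.sq_sqrt (hg k)
  simp only [hf', hg'] at h
  have h0 : 0 ≤ ∑ k, Real.sqrt (f k) * Real.sqrt (g k) :=
    Finset.sum_nonneg fun k _ => mul_nonneg (Real.sqrt_nonneg _) (Real.sqrt_nonneg _)
  calc ∑ k, Real.sqrt (f k) * Real.sqrt (g k)
      = Real.sqrt ((∑ k, Real.sqrt (f k) * Real.sqrt (g k)) ^ 2) := (Real.sqrt_sq h0).symm
    _ ≤ Real.sqrt ((∑ k, f k) * ∑ k, g k) := Real.sqrt_le_sqrt h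
    _ = _ := Real.sqrt_mul (Finset.sum_nonneg fun k _ => hf k) _

lemma key {d K : ℕ} (X : Matrix (Fin d) (Fin d) ℂ) (M : Fin K → Matrix (Fin d) (Fin d) ℂ)
    (hTP : ∑ k, (M k)ᴴ * M k = 1) (u v : Fin d → ℂ) :
    ‖∑ k, star u ⬝ᵥ ((M k * X * (M k)ᴴ) *ᵥ v)‖ ≤
      Real.sqrt ((star u ⬝ᵥ u).re * (star v ⬝ᵥ v).re) * traceNorm X := by
  have hT : (Xᴴ * X).PosSemidef := Matrix.posSemidef_conjTranspose_mul_self X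
  obtain ⟨V, lam, hV1, hV2, hlam, hspec, hVdef, hlamdef⟩ :
      ∃ (V : Matrix (Fin d) (Fin d) ℂ) (lam : Fin d → ℝ),
        Vᴴ * V = 1 ∧ V * Vᴴ = 1 ∧ (∀ i, 0 ≤ lam i) ∧
          Xᴴ * X = V * Matrix.diagonal (fun i => (lam i : ℂ)) * Vᴴ ∧
            V = hT.1.eigenvectorUnitary.1 ∧ lam = hT.1.eigenvalues := by
    refine ⟨hT.1.eigenvectorUnitary.1, hT.1.eigenvalues, ?_, ?_, hT.eigenvalues_nonneg, ?_, rfl, rfl⟩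
    · have h := Matrix.mem_unitaryGroup_iff'.mp hT.1.eigenvectorUnitary.2
      rwa [Matrix.star_eq_conjTranspose] at h
    · have h := Matrix.mem_unitaryGroup_iff.mp hT.1.eigenvectorUnitary.2
      rwa [Matrix.star_eq_conjTranspose] at h
    · have h := hT.1.spectral_theorem
      rwa [Unitary.conjStarAlgAut_apply, Matrix.star_eq_conjTranspose] at h
  have hid : fnm V lam (fun t => t) = Xᴴ * X := hspec.symm
  obtain ⟨R, hRdef⟩ : ∃ R : Matrix (Fin d) (Fin d) ℂ,
      R = fnm V lam (fun t => Real.sqrt (Real.sqrt t)) := ⟨_, rfl⟩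
  obtain ⟨A, hAdef⟩ : ∃ A : Matrix (Fin d) (Fin d) ℂ,
      A = X * fnm V lam (fun t => if t = 0 then 0 else (Real.sqrt (Real.sqrt t))⁻¹) := ⟨_, rfl⟩
  -- support projection
  have hQ : fnm V lam (fun t => if t = 0 then 0 else (Real.sqrt (Real.sqrt t))⁻¹)
      * fnm V lam (fun t => Real.sqrt (Real.sqrt t))
      = fnm V lam (fun t => if t = 0 then 0 else 1) := by
    rw [fnm_mul hV1]
    apply fnm_congr
    intro i
    by_cases h : lam i = 0
    · simp [h]
    · have hpos : 0 < Real.sqrt (Real.sqrt (lam i)) :=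
        Real.sqrt_pos.mpr (Real.sqrt_pos.mpr (lt_of_le_of_ne (hlam i) (Ne.symm h)))
      simp only [h, if_false]
      exact inv_mul_cancel₀ (ne_of_gt hpos)
  have hXQ : X * fnm V lam (fun t => if t = 0 then 0 else 1) = X := by
    have h1Q : (1 : Matrix (Fin d) (Fin d) ℂ) - fnm V lam (fun t => if t = 0 then 0 else 1)
        = fnm V lam (fun t => 1 - (if t = 0 then 0 else 1)) := by
      rw [fnm_sub, fnm_one hV2]
    have hker : (X * (1 - fnm V lam (fun t => if t = 0 then 0 else 1)))ᴴ *
        (X * (1 - fnm V lam (fun t => if t = 0 then 0 else 1))) = 0 := by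
      rw [Matrix.conjTranspose_mul, h1Q, fnm_conjTranspose]
      calc fnm V lam (fun t => 1 - (if t = 0 then 0 else 1)) * Xᴴ *
            (X * fnm V lam (fun t => 1 - (if t = 0 then 0 else 1)))
          = fnm V lam (fun t => 1 - (if t = 0 then 0 else 1)) * (Xᴴ * X) *
              fnm V lam (fun t => 1 - (if t = 0 then 0 else 1)) := by
            simp [Matrix.mul_assoc]
        _ = fnm V lam (fun t => 1 - (if t = 0 then 0 else 1)) * fnm V lam (fun t => t) *
              fnm V lam (fun t => 1 - (if t = 0 then 0 else 1)) := by rw [hid]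
        _ = fnm V lam (fun t => ((1 - (if t = 0 then 0 else 1)) * t) *
              (1 - (if t = 0 then 0 else 1))) := by rw [fnm_mul hV1, fnm_mul hV1]
        _ = fnm V lam (fun _ => 0) := by
            apply fnm_congr
            intro i
            by_cases h : lam i = 0 <;> simp [h]
        _ = 0 := fnm_zero
    have h0 := Matrix.conjTranspose_mul_self_eq_zero.mp hker
    rw [Matrix.mul_sub, Matrix.mul_one, sub_eq_zero] at h0
    exact h0.symm
  have hXAR : A * R = X := by
    rw [hAdef, hRdef, Matrix.mul_assoc, hQ, hXQ]
  -- A * Aᴴ facts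
  have hAAH : A * Aᴴ = X * fnm V lam (fun t =>
      (if t = 0 then 0 else (Real.sqrt (Real.sqrt t))⁻¹) *
      (if t = 0 then 0 else (Real.sqrt (Real.sqrt t))⁻¹)) * Xᴴ := by
    rw [hAdef, Matrix.conjTranspose_mul, fnm_conjTranspose, ← fnm_mul hV1]
    simp [Matrix.mul_assoc]
  have hAAtr : (A * Aᴴ).trace = ∑ i, (Real.sqrt (lam i) : ℂ) := by
    rw [hAAH, Matrix.trace_mul_comm, ← Matrix.mul_assoc, ← hid, fnm_mul hV1, fnm_trace hV1]
    apply Finset.sum_congr rfl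
    intro i _
    norm_cast
    by_cases h : lam i = 0
    · simp [h]
    · have hpos : 0 < lam i := lt_of_le_of_ne (hlam i) (Ne.symm h)
      have h2 : Real.sqrt (Real.sqrt (lam i)) * Real.sqrt (Real.sqrt (lam i))
          = Real.sqrt (lam i) := Real.mul_self_sqrt (Real.sqrt_nonneg _)
      have h3 : Real.sqrt (lam i) ≠ 0 := ne_of_gt (Real.sqrt_pos.mpr hpos)
      simp only [h, if_false]
      rw [← mul_inv, h2]
      field_simp
      rw [Real.sq_sqrt (hlam i)]
  -- R * Rᴴ facts
  have hRH : Rᴴ = R := by rw [hRdef]; exact fnm_conjTranspose _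
  have hRRH : R * Rᴴ = fnm V lam Real.sqrt := by
    rw [hRH, hRdef, fnm_mul hV1]
    apply fnm_congr
    intro i
    exact Real.mul_self_sqrt (Real.sqrt_nonneg _)
  have hRRtr : (R * Rᴴ).trace = ∑ i, (Real.sqrt (lam i) : ℂ) := by
    rw [hRRH, fnm_trace hV1]
  have hRRpsd : (R * Rᴴ).PosSemidef := Matrix.posSemidef_self_mul_conjTranspose R
  -- identification of the square root
  have hTN : traceNorm X = ∑ i, Real.sqrt (lam i) := by
    have h0 : traceNorm X = ((fnm V lam Real.sqrt).trace).re := by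
      rw [hVdef, hlamdef]; rfl
    rw [h0, fnm_trace hV1, Complex.re_sum]
    simp
  obtain ⟨N, hNdef⟩ : ∃ N : ℝ, N = ∑ i, Real.sqrt (lam i) := ⟨_, rfl⟩
  rw [← hNdef] at hTN
  have hN0 : 0 ≤ N := hNdef ▸ Finset.sum_nonneg fun i _ => Real.sqrt_nonneg _
  -- per-k rewriting
  have hterm : ∀ k, star u ⬝ᵥ ((M k * X * (M k)ᴴ) *ᵥ v)
      = star ((M k * A)ᴴ *ᵥ u) ⬝ᵥ ((R * (M k)ᴴ) *ᵥ v) := by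
    intro k
    have hfact : M k * X * (M k)ᴴ = (M k * A) * (R * (M k)ᴴ) := by
      rw [← hXAR]; simp [Matrix.mul_assoc]
    rw [hfact, dot_shift]
  have ha : ∀ k, star ((M k * A)ᴴ *ᵥ u) ⬝ᵥ ((M k * A)ᴴ *ᵥ u)
      = star u ⬝ᵥ ((M k * (A * Aᴴ) * (M k)ᴴ) *ᵥ u) := by
    intro k
    have hfact : M k * (A * Aᴴ) * (M k)ᴴ = (M k * A) * (M k * A)ᴴ := by
      rw [Matrix.conjTranspose_mul]; simp [Matrix.mul_assoc]
    rw [hfact, dot_shift]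
  have hb : ∀ k, star ((R * (M k)ᴴ) *ᵥ v) ⬝ᵥ ((R * (M k)ᴴ) *ᵥ v)
      = star v ⬝ᵥ ((M k * (R * Rᴴ) * (M k)ᴴ) *ᵥ v) := by
    intro k
    have hfact : M k * (R * Rᴴ) * (M k)ᴴ = (R * (M k)ᴴ)ᴴ * (R * (M k)ᴴ) := by
      rw [Matrix.conjTranspose_mul, Matrix.conjTranspose_conjTranspose, hRH]
      simp [Matrix.mul_assoc]
    rw [hfact]
    conv_rhs => rw [dot_shift, Matrix.conjTranspose_conjTranspose]
  -- sum bounds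
  have hsum_a : ∑ k, (star ((M k * A)ᴴ *ᵥ u) ⬝ᵥ ((M k * A)ᴴ *ᵥ u)).re
      ≤ (star u ⬝ᵥ u).re * N := by
    have h1 : ∑ k, (star ((M k * A)ᴴ *ᵥ u) ⬝ᵥ ((M k * A)ᴴ *ᵥ u)).re
        = (star u ⬝ᵥ ((∑ k, M k * (A * Aᴴ) * (M k)ᴴ) *ᵥ u)).re := by
      rw [sum_mulVec'_s14, dot_sum', Complex.re_sum]
      exact Finset.sum_congr rfl fun k _ => by rw [ha k]
    rw [h1]
    have hpsd := channel_psd M (Matrix.posSemidef_self_mul_conjTranspose A)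
    have hq := psd_quad_le_trace hpsd u
    rw [channel_trace M hTP _, hAAtr, Complex.re_sum] at hq
    rw [hNdef]
    simpa using hq
  have hsum_b : ∑ k, (star ((R * (M k)ᴴ) *ᵥ v) ⬝ᵥ ((R * (M k)ᴴ) *ᵥ v)).re
      ≤ (star v ⬝ᵥ v).re * N := by
    have h1 : ∑ k, (star ((R * (M k)ᴴ) *ᵥ v) ⬝ᵥ ((R * (M k)ᴴ) *ᵥ v)).re
        = (star v ⬝ᵥ ((∑ k, M k * (R * Rᴴ) * (M k)ᴴ) *ᵥ v)).re := by
      rw [sum_mulVec'_s14, dot_sum', Complex.re_sum]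
      exact Finset.sum_congr rfl fun k _ => by rw [hb k]
    rw [h1]
    have hpsd := channel_psd M hRRpsd
    have hq := psd_quad_le_trace hpsd v
    rw [channel_trace M hTP _, hRRtr, Complex.re_sum] at hq
    rw [hNdef]
    simpa using hq
  -- final chain
  have hu0 : 0 ≤ (star u ⬝ᵥ u).re := dot_self_re_nonneg u
  have hv0 : 0 ≤ (star v ⬝ᵥ v).re := dot_self_re_nonneg v
  calc ‖∑ k, star u ⬝ᵥ ((M k * X * (M k)ᴴ) *ᵥ v)‖
      ≤ ∑ k, ‖star u ⬝ᵥ ((M k * X * (M k)ᴴ) *ᵥ v)‖ :=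
        norm_sum_le _ _
    _ = ∑ k, ‖star ((M k * A)ᴴ *ᵥ u) ⬝ᵥ ((R * (M k)ᴴ) *ᵥ v)‖ := by
        exact Finset.sum_congr rfl fun k _ => by rw [hterm k]
    _ ≤ ∑ k, Real.sqrt ((star ((M k * A)ᴴ *ᵥ u) ⬝ᵥ ((M k * A)ᴴ *ᵥ u)).re)
          * Real.sqrt ((star ((R * (M k)ᴴ) *ᵥ v) ⬝ᵥ ((R * (M k)ᴴ) *ᵥ v)).re) :=
        Finset.sum_le_sum fun k _ => dot_cs_s14 _ _
    _ ≤ Real.sqrt (∑ k, (star ((M k * A)ᴴ *ᵥ u) ⬝ᵥ ((M k * A)ᴴ *ᵥ u)).re)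
          * Real.sqrt (∑ k, (star ((R * (M k)ᴴ) *ᵥ v) ⬝ᵥ ((R * (M k)ᴴ) *ᵥ v)).re) :=
        sum_sqrt_mul_sqrt_le _ _ (fun k => dot_self_re_nonneg _) (fun k => dot_self_re_nonneg _)
    _ ≤ Real.sqrt ((star u ⬝ᵥ u).re * N) * Real.sqrt ((star v ⬝ᵥ v).re * N) :=
        mul_le_mul (Real.sqrt_le_sqrt hsum_a) (Real.sqrt_le_sqrt hsum_b)
          (Real.sqrt_nonneg _) (Real.sqrt_nonneg _)
    _ = Real.sqrt ((star u ⬝ᵥ u).re * (star v ⬝ᵥ v).re) * N := by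
        rw [← Real.sqrt_mul (mul_nonneg hu0 hN0)]
        rw [show (star u ⬝ᵥ u).re * N * ((star v ⬝ᵥ v).re * N)
            = (star u ⬝ᵥ u).re * (star v ⬝ᵥ v).re * (N * N) by ring]
        rw [Real.sqrt_mul (mul_nonneg hu0 hv0), Real.sqrt_mul_self hN0]
    _ = Real.sqrt ((star u ⬝ᵥ u).re * (star v ⬝ᵥ v).re) * traceNorm X := by rw [hTN]



/-- **Deterministic fidelity bound for mixed-to-pure transitions.** Let `H` be Hermitian with
spectral projections `P i`, `ρ` a density matrix, `ψ` a unit vector with `q_E = ‖P_E ψ‖²`, and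
`ρ_{E,E'} = P_E ρ P_{E'}`. Every quantum channel whose Kraus operators commute with `H`
satisfies `⟨ψ|ℳ(ρ)|ψ⟩ ≤ ∑_{E,E'} √(q_E q_{E'}) ‖ρ_{E,E'}‖₁`. -/
theorem stmt_14 {d K : ℕ} {ι : Type} [Fintype ι] [DecidableEq ι]
    (H : Matrix (Fin d) (Fin d) ℂ) (hH : H.IsHermitian)
    (E : ι → ℝ) (hE : Function.Injective E)
    (P : ι → Matrix (Fin d) (Fin d) ℂ)
    (hHerm : ∀ i, (P i).IsHermitian)
    (hIdem : ∀ i, P i * P i = P i)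
    (hOrth : ∀ i j, i ≠ j → P i * P j = 0)
    (hSum : ∑ i, P i = 1)
    (hSpec : H = ∑ i, (E i : ℂ) • P i)
    (ρ : Matrix (Fin d) (Fin d) ℂ) (hρ : ρ.PosSemidef) (hρ1 : ρ.trace = 1)
    (ψ : Fin d → ℂ) (hψ : star ψ ⬝ᵥ ψ = 1)
    (M : Fin K → Matrix (Fin d) (Fin d) ℂ)
    (hTP : ∑ k, (M k)ᴴ * M k = 1)
    (hComm : ∀ k, M k * H = H * M k) :
    star ψ ⬝ᵥ ((∑ k, M k * ρ * (M k)ᴴ) *ᵥ ψ) ≤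
      ((∑ i, ∑ j, Real.sqrt (wt (P i) ψ * wt (P j) ψ) * traceNorm (P i * ρ * P j) : ℝ) : ℂ) := by
  classical
  -- powers of H
  have hpow : ∀ n : ℕ, H ^ n = ∑ i, ((E i : ℂ)) ^ n • P i := by
    intro n
    induction n with
    | zero => simpa using hSum.symm
    | succ n ih =>
      rw [pow_succ, ih, hSpec, Finset.sum_mul_sum]
      refine Finset.sum_congr rfl fun i _ => ?_
      rw [Finset.sum_eq_single i]
      · rw [smul_mul_assoc, mul_smul_comm, smul_smul, hIdem i, pow_succ]
      · intro j _ hj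
        rw [smul_mul_assoc, mul_smul_comm, hOrth i j (Ne.symm hj), smul_zero, smul_zero]
      · intro h; exact absurd (Finset.mem_univ i) h
  -- Kraus operators commute with the spectral projections
  have hMP : ∀ (k : Fin K) (i : ι), M k * P i = P i * M k := by
    intro k i
    have hvinj : Set.InjOn (fun j : ι => (E j : ℂ)) ↑(Finset.univ : Finset ι) :=
      fun a _ b _ hab => hE (Complex.ofReal_inj.mp hab)
    set v : ι → ℂ := fun j => (E j : ℂ) with hv
    set p : Polynomial ℂ := Lagrange.basis Finset.univ v i with hp
    have hPaeval : P i = ∑ n ∈ Finset.range (p.natDegree + 1), p.coeff n • H ^ n := by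
      have h1 : ∑ n ∈ Finset.range (p.natDegree + 1), p.coeff n • H ^ n
          = ∑ j, Polynomial.eval (v j) p • P j := by
        calc ∑ n ∈ Finset.range (p.natDegree + 1), p.coeff n • H ^ n
            = ∑ n ∈ Finset.range (p.natDegree + 1), ∑ j, (p.coeff n * (v j) ^ n) • P j := by
              refine Finset.sum_congr rfl fun n _ => ?_
              rw [hpow n, Finset.smul_sum]
              exact Finset.sum_congr rfl fun j _ => by rw [smul_smul]
          _ = ∑ j, ∑ n ∈ Finset.range (p.natDegree + 1), (p.coeff n * (v j) ^ n) • P j :=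
              Finset.sum_comm
          _ = ∑ j, Polynomial.eval (v j) p • P j := by
              refine Finset.sum_congr rfl fun j _ => ?_
              rw [← Finset.sum_smul]
              congr 1
              exact (Polynomial.eval_eq_sum_range _).symm
      rw [h1, Finset.sum_eq_single i]
      · rw [hp, Lagrange.eval_basis_self hvinj (Finset.mem_univ i), one_smul]
      · intro j _ hj
        rw [hp, Lagrange.eval_basis_of_ne (Ne.symm hj) (Finset.mem_univ j), zero_smul]
      · intro h; exact absurd (Finset.mem_univ i) h
    rw [hPaeval, Finset.mul_sum, Finset.sum_mul]
    refine Finset.sum_congr rfl fun n _ => ?_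
    rw [mul_smul_comm, smul_mul_assoc,
      (Commute.pow_right (hComm k) n : M k * H ^ n = H ^ n * M k)]
  have hMPH : ∀ (k : Fin K) (j : ι), (M k)ᴴ * P j = P j * (M k)ᴴ := by
    intro k j
    have h := congrArg Matrix.conjTranspose (hMP k j)
    rw [Matrix.conjTranspose_mul, Matrix.conjTranspose_mul, (hHerm j).eq] at h
    exact h.symm
  -- decomposition
  have hrho : ∀ k, M k * ρ * (M k)ᴴ = ∑ i, ∑ j, M k * (P i * ρ * P j) * (M k)ᴴ := by
    intro k
    have h1 : ρ = ∑ i, ∑ j, P i * ρ * P j := by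
      calc ρ = (∑ i, P i) * ρ * (∑ j, P j) := by rw [hSum, Matrix.one_mul, Matrix.mul_one]
        _ = ∑ i, ∑ j, P i * ρ * P j := by
            rw [Finset.sum_mul, Finset.sum_mul]
            exact Finset.sum_congr rfl fun i _ => Finset.mul_sum _ _ _
    conv_lhs => rw [h1]
    simp only [Finset.mul_sum, Finset.sum_mul]
  have hdecomp : star ψ ⬝ᵥ ((∑ k, M k * ρ * (M k)ᴴ) *ᵥ ψ)
      = ∑ i, ∑ j, ∑ k, star ψ ⬝ᵥ ((M k * (P i * ρ * P j) * (M k)ᴴ) *ᵥ ψ) := by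
    rw [sum_mulVec'_s14, dot_sum']
    have h2 : ∀ k, star ψ ⬝ᵥ ((M k * ρ * (M k)ᴴ) *ᵥ ψ)
        = ∑ i, ∑ j, star ψ ⬝ᵥ ((M k * (P i * ρ * P j) * (M k)ᴴ) *ᵥ ψ) := by
      intro k
      rw [hrho k, sum_mulVec'_s14, dot_sum']
      exact Finset.sum_congr rfl fun i _ => by rw [sum_mulVec'_s14, dot_sum']
    rw [Finset.sum_congr rfl fun k _ => h2 k]
    rw [Finset.sum_comm]
    exact Finset.sum_congr rfl fun i _ => Finset.sum_comm
  -- moving the projections onto ψ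
  have hmove : ∀ (i j : ι) (k : Fin K), star ψ ⬝ᵥ ((M k * (P i * ρ * P j) * (M k)ᴴ) *ᵥ ψ)
      = star (P i *ᵥ ψ) ⬝ᵥ ((M k * (P i * ρ * P j) * (M k)ᴴ) *ᵥ (P j *ᵥ ψ)) := by
    intro i j k
    have hmat : P i * (M k * (P i * ρ * P j) * (M k)ᴴ * P j) = M k * (P i * ρ * P j) * (M k)ᴴ := by
      have e1 : (M k)ᴴ * P j = P j * (M k)ᴴ := hMPH k j
      have e2 : P i * M k = M k * P i := (hMP k i).symm
      calc P i * (M k * (P i * ρ * P j) * (M k)ᴴ * P j)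
          = P i * (M k * (P i * (ρ * (P j * (P j * (M k)ᴴ))))) := by
            rw [Matrix.mul_assoc (M k * (P i * ρ * P j)), e1]
            simp only [Matrix.mul_assoc]
        _ = P i * (M k * (P i * (ρ * (P j * (M k)ᴴ)))) := by
            rw [← Matrix.mul_assoc (P j) (P j), hIdem j]
        _ = M k * (P i * (P i * (ρ * (P j * (M k)ᴴ)))) := by
            rw [← Matrix.mul_assoc (P i) (M k), e2, Matrix.mul_assoc]
        _ = M k * (P i * (ρ * (P j * (M k)ᴴ))) := by
            rw [← Matrix.mul_assoc (P i) (P i), hIdem i]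
        _ = M k * (P i * ρ * P j) * (M k)ᴴ := by simp only [Matrix.mul_assoc]
    calc star ψ ⬝ᵥ ((M k * (P i * ρ * P j) * (M k)ᴴ) *ᵥ ψ)
        = star ψ ⬝ᵥ ((P i * (M k * (P i * ρ * P j) * (M k)ᴴ * P j)) *ᵥ ψ) := by rw [hmat]
      _ = star ((P i)ᴴ *ᵥ ψ) ⬝ᵥ ((M k * (P i * ρ * P j) * (M k)ᴴ * P j) *ᵥ ψ) :=
          dot_shift _ _ _ _
      _ = star (P i *ᵥ ψ) ⬝ᵥ ((M k * (P i * ρ * P j) * (M k)ᴴ) *ᵥ (P j *ᵥ ψ)) := by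
          rw [(hHerm i).eq, Matrix.mulVec_mulVec]
  -- final assembly
  have hpos : (0:ℂ) ≤ star ψ ⬝ᵥ ((∑ k, M k * ρ * (M k)ᴴ) *ᵥ ψ) := (channel_psd M hρ).dotProduct_mulVec_nonneg ψ
  rw [Complex.le_def] at hpos ⊢
  constructor
  · rw [hdecomp, Complex.re_sum, Complex.ofReal_re]
    refine Finset.sum_le_sum fun i _ => ?_
    rw [Complex.re_sum]
    refine Finset.sum_le_sum fun j _ => ?_
    have hmove' : ∑ k, star ψ ⬝ᵥ ((M k * (P i * ρ * P j) * (M k)ᴴ) *ᵥ ψ)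
        = ∑ k, star (P i *ᵥ ψ) ⬝ᵥ ((M k * (P i * ρ * P j) * (M k)ᴴ) *ᵥ (P j *ᵥ ψ)) :=
      Finset.sum_congr rfl fun k _ => hmove i j k
    calc (∑ k, star ψ ⬝ᵥ ((M k * (P i * ρ * P j) * (M k)ᴴ) *ᵥ ψ)).re
        ≤ ‖∑ k, star ψ ⬝ᵥ ((M k * (P i * ρ * P j) * (M k)ᴴ) *ᵥ ψ)‖ :=
          Complex.re_le_norm _
      _ = ‖∑ k, star (P i *ᵥ ψ) ⬝ᵥ
            ((M k * (P i * ρ * P j) * (M k)ᴴ) *ᵥ (P j *ᵥ ψ))‖ := by rw [hmove']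
      _ ≤ Real.sqrt ((star (P i *ᵥ ψ) ⬝ᵥ (P i *ᵥ ψ)).re * (star (P j *ᵥ ψ) ⬝ᵥ (P j *ᵥ ψ)).re)
            * traceNorm (P i * ρ * P j) := key _ M hTP _ _
      _ = Real.sqrt (wt (P i) ψ * wt (P j) ψ) * traceNorm (P i * ρ * P j) := rfl
  · rw [hpos.2.symm.trans Complex.zero_im, Complex.ofReal_im]
end
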